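/- arXiv:1007.0430 — 7 statements merged into one kernel-verified Lean document; each statement's English description precedes it below -/
import Mathlib

section
/- Let V = {V_i} be a reconstruction system with S_V = Σ V_i* V_i positive definite, lower frame bound A_V = ‖S_V⁻¹‖⁻¹ (operator norm). Fix J ⊆ {1,...,m} and suppose M_J = I − Σ_{i∈J} V_i* V_i S_V⁻¹ is invertible. Then the erased system V_J = (V_i)_{i∉J} has lower bound A_{V_J} = ‖S_{V_J}⁻¹‖⁻¹ ≥ A_V / ‖M_J⁻¹‖, and upper bound B_{V_J} = ‖S_{V_J}‖ ≤ ‖S_V‖ = B_V. -/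
open Matrix
open scoped ComplexOrder

/-- The spectral (operator) norm of a square complex matrix. -/
noncomputable def opN {d : ℕ} (A : Matrix (Fin d) (Fin d) ℂ) : ℝ :=
  ‖Matrix.toEuclideanCLM (𝕜 := ℂ) A‖

lemma opN_nonneg {d : ℕ} (A : Matrix (Fin d) (Fin d) ℂ) : 0 ≤ opN A := norm_nonneg _

open scoped Matrix.Norms.L2Operator in
lemma opN_eq_norm {d : ℕ} (A : Matrix (Fin d) (Fin d) ℂ) : opN A = ‖A‖ := rfl

open scoped Matrix.Norms.L2Operator in
lemma opN_mul_le {d : ℕ} (A B : Matrix (Fin d) (Fin d) ℂ) :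
    opN (A * B) ≤ opN A * opN B := by
  simp only [opN_eq_norm]; exact norm_mul_le A B

lemma isPositive_of_posSemidef {d : ℕ} {A : Matrix (Fin d) (Fin d) ℂ} (hA : A.PosSemidef) :
    (Matrix.toEuclideanCLM (𝕜 := ℂ) A).IsPositive := by
  rw [← Matrix.isPositive_toEuclideanLin_iff] at hA
  exact (LinearMap.isPositive_toContinuousLinearMap_iff _).mpr hA

lemma posSemidef_sum {d m : ℕ} (k : Fin m → ℕ)
    (V : ∀ i : Fin m, Matrix (Fin (k i)) (Fin d) ℂ) (t : Finset (Fin m)) :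
    (∑ i ∈ t, (V i)ᴴ * V i).PosSemidef :=
  Finset.sum_induction _ _ (fun _ _ ha hb => ha.add hb) (Matrix.PosSemidef.zero)
    (fun i _ => Matrix.posSemidef_conjTranspose_mul_self (V i))

/-- If `V` is a reconstruction system with lower frame bound
`A_V = ‖S_V⁻¹‖⁻¹` and `M_J = I - (∑_{i∈J} Vᵢᴴ Vᵢ) S_V⁻¹` is invertible, then the erased
system has lower bound `A_{V_J} = ‖S_{V_J}⁻¹‖⁻¹ ≥ A_V / ‖M_J⁻¹‖` and upper bound
`B_{V_J} = ‖S_{V_J}‖ ≤ ‖S_V‖ = B_V`. -/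
theorem erasure_frame_bounds
    (d m : ℕ) (k : Fin m → ℕ)
    (V : ∀ i : Fin m, Matrix (Fin (k i)) (Fin d) ℂ)
    (S : Matrix (Fin d) (Fin d) ℂ) (hS : S = ∑ i, (V i)ᴴ * V i)
    (hSpd : S.PosDef)
    (J : Finset (Fin m))
    (M : Matrix (Fin d) (Fin d) ℂ)
    (hM : M = 1 - (∑ i ∈ J, (V i)ᴴ * V i) * S⁻¹)
    (hMinv : IsUnit M)
    (SJ : Matrix (Fin d) (Fin d) ℂ)
    (hSJ : SJ = ∑ i ∈ Jᶜ, (V i)ᴴ * V i) :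
    (opN S⁻¹)⁻¹ / opN M⁻¹ ≤ (opN SJ⁻¹)⁻¹ ∧ opN SJ ≤ opN S := by
  have hSunit : IsUnit S := hSpd.isUnit
  have hSdet : IsUnit S.det := (Matrix.isUnit_iff_isUnit_det S).mp hSunit
  have hMS : M * S = SJ := by
    rw [hM, sub_mul, one_mul, mul_assoc, Matrix.nonsing_inv_mul S hSdet, mul_one, hS, hSJ,
      ← Finset.sum_compl_add_sum J fun i => (V i)ᴴ * V i]
    abel
  constructor
  · -- lower bound
    have hSJinv : SJ⁻¹ = S⁻¹ * M⁻¹ := by rw [← hMS, Matrix.mul_inv_rev]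
    have hc : opN SJ⁻¹ ≤ opN S⁻¹ * opN M⁻¹ := by rw [hSJinv]; exact opN_mul_le _ _
    rcases Nat.eq_zero_or_pos d with hd | hd
    · subst hd
      have hz : ∀ A : Matrix (Fin 0) (Fin 0) ℂ, opN A = 0 := fun A => by
        rw [Subsingleton.elim A 0, opN, map_zero, norm_zero]
      simp [hz]
    · have hSJu : IsUnit SJ := hMS ▸ hMinv.mul hSunit
      have hSJd : IsUnit SJ.det := (Matrix.isUnit_iff_isUnit_det SJ).mp hSJu
      have hne : SJ⁻¹ ≠ 0 := by
        intro h
        have := Matrix.nonsing_inv_mul SJ hSJd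
        rw [h, zero_mul] at this
        have h00 := congrFun (congrFun this ⟨0, hd⟩) ⟨0, hd⟩
        simp [Matrix.one_apply] at h00
      have hcpos : 0 < opN SJ⁻¹ := by
        rcases lt_or_eq_of_le (opN_nonneg SJ⁻¹) with h | h
        · exact h
        · exfalso
          apply hne
          have : Matrix.toEuclideanCLM (𝕜 := ℂ) SJ⁻¹ = 0 := by
            rw [← norm_eq_zero]; exact h.symm
          have := congrArg (Matrix.toEuclideanCLM (𝕜 := ℂ)).symm this
          simpa using this
      calc (opN S⁻¹)⁻¹ / opN M⁻¹ = (opN S⁻¹ * opN M⁻¹)⁻¹ := by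
            rw [mul_inv, div_eq_mul_inv]
        _ ≤ (opN SJ⁻¹)⁻¹ := by
            apply inv_anti₀ hcpos hc
  · -- upper bound
    have hTU : Matrix.toEuclideanCLM (𝕜 := ℂ) SJ ≤ Matrix.toEuclideanCLM (𝕜 := ℂ) S := by
      rw [ContinuousLinearMap.le_def, ← map_sub]
      apply isPositive_of_posSemidef
      have : S - SJ = ∑ i ∈ J, (V i)ᴴ * V i := by
        rw [hS, hSJ, ← Finset.sum_compl_add_sum J fun i => (V i)ᴴ * V i]
        abel
      rw [this]
      exact posSemidef_sum k V J
    have hT0 : (0 : EuclideanSpace ℂ (Fin d) →L[ℂ] EuclideanSpace ℂ (Fin d))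
        ≤ Matrix.toEuclideanCLM (𝕜 := ℂ) SJ :=
      (ContinuousLinearMap.nonneg_iff_isPositive _).mpr
        (isPositive_of_posSemidef (hSJ ▸ posSemidef_sum k V Jᶜ))
    exact CStarAlgebra.norm_le_norm_of_nonneg_of_le hT0 hTU
end

section
/- Let V = {V_i} be a reconstruction system and J ⊆ {1,...,m} such that ‖Σ_{i∈J} V_i* V_i‖ < A_V where A_V = ‖S_V⁻¹‖⁻¹. Then M_J = I − Σ_{i∈J} V_i* V_i S_V⁻¹ is invertible, and A_V − ‖Σ_{i∈J} V_i* V_i‖ ≤ A_V / ‖M_J⁻¹‖. -/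
open Matrix
open scoped ComplexOrder

/-- If `‖∑_{i∈J} Vᵢᴴ Vᵢ‖ < A_V = ‖S_V⁻¹‖⁻¹`, then
`M_J = I - (∑_{i∈J} Vᵢᴴ Vᵢ) S_V⁻¹` is invertible and
`A_V - ‖∑_{i∈J} Vᵢᴴ Vᵢ‖ ≤ A_V / ‖M_J⁻¹‖`. -/
theorem erasure_smallness_criterion
    (d m : ℕ) (k : Fin m → ℕ)
    (V : ∀ i : Fin m, Matrix (Fin (k i)) (Fin d) ℂ)
    (S : Matrix (Fin d) (Fin d) ℂ) (hS : S = ∑ i, (V i)ᴴ * V i)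
    (hSpd : S.PosDef)
    (J : Finset (Fin m))
    (M : Matrix (Fin d) (Fin d) ℂ)
    (hM : M = 1 - (∑ i ∈ J, (V i)ᴴ * V i) * S⁻¹)
    (hlt : opN (∑ i ∈ J, (V i)ᴴ * V i) < (opN S⁻¹)⁻¹) :
    IsUnit M ∧ (opN S⁻¹)⁻¹ - opN (∑ i ∈ J, (V i)ᴴ * V i) ≤ (opN S⁻¹)⁻¹ / opN M⁻¹ := by
  set N : Matrix (Fin d) (Fin d) ℂ := ∑ i ∈ J, (V i)ᴴ * V i with hN
  set f := Matrix.toEuclideanCLM (𝕜 := ℂ) (n := Fin d) with hf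
  set a := opN S⁻¹ with ha
  set n := opN N with hn
  have hn0 : 0 ≤ n := norm_nonneg _
  have ha0 : 0 < a := by
    by_contra h
    push_neg at h
    have : a = 0 := le_antisymm h (norm_nonneg _)
    rw [this] at hlt
    simp at hlt
    exact absurd hlt (not_lt.mpr hn0)
  -- the CLM image of M
  have hna : n * a < 1 := by
    have := (mul_lt_mul_of_pos_right hlt ha0)
    rwa [inv_mul_cancel₀ (ne_of_gt ha0)] at this
  set t := f N * f S⁻¹ with ht
  have htlt : ‖t‖ < 1 := lt_of_le_of_lt (norm_mul_le _ _) hna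
  have hfM : f M = 1 - t := by
    rw [hM, map_sub, _root_.map_one, _root_.map_mul]
  -- invertibility
  have hUfM : IsUnit (f M) := hfM ▸ isUnit_one_sub_of_norm_lt_one htlt
  have hUM : IsUnit M := by
    have := hUfM.map (Matrix.toEuclideanCLM (𝕜 := ℂ) (n := Fin d)).symm
    simpa using this
  refine ⟨hUM, ?_⟩
  -- the inverse matrix corresponds to the unit's inverse
  set u : (EuclideanSpace ℂ (Fin d) →L[ℂ] EuclideanSpace ℂ (Fin d))ˣ :=
    Units.oneSub t htlt with hu
  have hMM : M * M⁻¹ = 1 := Matrix.mul_nonsing_inv M ((Matrix.isUnit_iff_isUnit_det M).mp hUM)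
  have hMM' : M⁻¹ * M = 1 := Matrix.nonsing_inv_mul M ((Matrix.isUnit_iff_isUnit_det M).mp hUM)
  have hfinv : f M⁻¹ = ↑u⁻¹ := by
    have h1 : (↑u : EuclideanSpace ℂ (Fin d) →L[ℂ] EuclideanSpace ℂ (Fin d)) * f M⁻¹ = 1 := by
      rw [Units.val_oneSub, ← hfM, ← _root_.map_mul, hMM, _root_.map_one]
    exact (Units.inv_eq_of_mul_eq_one_right h1).symm
  -- norm bound on the inverse
  have hone : ‖(1 : EuclideanSpace ℂ (Fin d) →L[ℂ] EuclideanSpace ℂ (Fin d))‖ ≤ 1 :=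
    ContinuousLinearMap.norm_id_le
  have hbound : opN M⁻¹ ≤ (1 - ‖t‖)⁻¹ := by
    have : opN M⁻¹ = ‖∑' i : ℕ, t ^ i‖ := by
      rw [opN, ← hf, hfinv]; rfl
    rw [this]
    have := tsum_geometric_le_of_norm_lt_one t htlt
    linarith
  set b := opN M⁻¹ with hb
  have hb0 : 0 < b := by
    by_contra h
    push_neg at h
    have hbz : f M⁻¹ = 0 := by
      have : b = 0 := le_antisymm h (norm_nonneg _)
      exact norm_eq_zero.mp this
    have h1 : (1 : EuclideanSpace ℂ (Fin d) →L[ℂ] EuclideanSpace ℂ (Fin d)) = 0 := by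
      have := _root_.map_mul f M⁻¹ M
      rw [hMM', _root_.map_one, hbz, zero_mul] at this
      exact this
    have : f S⁻¹ = 0 := by
      calc f S⁻¹ = 1 * f S⁻¹ := (one_mul _).symm
        _ = 0 := by rw [h1, zero_mul]
    have : a = 0 := by rw [ha, opN, ← hf, this, norm_zero]
    exact absurd this (ne_of_gt ha0)
  -- final arithmetic
  have hb2 : b ≤ (1 - n * a)⁻¹ := by
    refine le_trans hbound ?_
    have h1 : (0:ℝ) < 1 - n * a := by linarith
    have h2 : 1 - n * a ≤ 1 - ‖t‖ := by
      have : ‖t‖ ≤ n * a := norm_mul_le _ _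
      linarith
    exact one_div (1-‖t‖) ▸ (inv_anti₀ h1 h2)
  have key : (1 - n * a) ≤ b⁻¹ := by
    have h1 : (0:ℝ) < 1 - n * a := by linarith
    have := inv_anti₀ hb0 hb2
    rwa [inv_inv] at this
  rw [div_eq_mul_inv]
  calc a⁻¹ - n = a⁻¹ * (1 - n * a) := by field_simp
    _ ≤ a⁻¹ * b⁻¹ := by
        apply mul_le_mul_of_nonneg_left key (le_of_lt (inv_pos.mpr ha0))
end

section
/- Let V be a reconstruction system and W a dual system of V. Then T_W* = T_{V^#}* + A for a unique A : ⊕ℂ^{k_i} → ℂ^d with A T_V = 0, and tr(S_W) = tr(S_{V^#}) + ‖A‖_F², where ‖·‖_F is the Frobenius norm. -/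
open Matrix
open scoped ComplexOrder

/-- If `W` is a dual system of the reconstruction system `V`, then the
synthesis operator of `W` decomposes uniquely as `T_W* = T_{V^#}* + A` with `A T_V = 0`
(componentwise: `Wᵢᴴ = S_V⁻¹ Vᵢᴴ + Bᵢ` with `∑ Bᵢ Vᵢ = 0`), and then
`tr S_W = tr S_{V^#} + ‖A‖_F²`. -/
theorem dual_decomposition_trace
    (d m : ℕ) (k : Fin m → ℕ)
    (V W : ∀ i : Fin m, Matrix (Fin (k i)) (Fin d) ℂ)
    (S : Matrix (Fin d) (Fin d) ℂ) (hS : S = ∑ i, (V i)ᴴ * V i)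
    (hSpd : S.PosDef)
    (hdual : ∑ i, (W i)ᴴ * V i = 1) :
    (∃! B : ∀ i : Fin m, Matrix (Fin d) (Fin (k i)) ℂ,
        (∀ i, (W i)ᴴ = S⁻¹ * (V i)ᴴ + B i) ∧ ∑ i, B i * V i = 0)
    ∧ (∀ B : ∀ i : Fin m, Matrix (Fin d) (Fin (k i)) ℂ,
        ((∀ i, (W i)ᴴ = S⁻¹ * (V i)ᴴ + B i) ∧ ∑ i, B i * V i = 0) →
        Matrix.trace (∑ i, (W i)ᴴ * W i)
          = Matrix.trace (∑ i, (V i * S⁻¹)ᴴ * (V i * S⁻¹))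
            + ((∑ i, ∑ a, ∑ b, ‖B i a b‖ ^ 2 : ℝ) : ℂ)) := by
  have hH : Sᴴ = S := hSpd.1
  have hdet : IsUnit S.det := isUnit_iff_ne_zero.mpr hSpd.det_pos.ne'
  have hinvmul : S⁻¹ * S = 1 := Matrix.nonsing_inv_mul S hdet
  have hinvH : (S⁻¹)ᴴ = S⁻¹ := by
    rw [Matrix.conjTranspose_nonsing_inv, hH]
  have hsumS : ∑ i, S⁻¹ * ((V i)ᴴ * V i) = 1 := by
    rw [← Finset.mul_sum, ← hS, hinvmul]
  constructor
  · refine ⟨fun i => (W i)ᴴ - S⁻¹ * (V i)ᴴ, ⟨fun i => by rw [add_sub_cancel], ?_⟩, ?_⟩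
    · simp only [Matrix.sub_mul, Finset.sum_sub_distrib, hdual, Matrix.mul_assoc, hsumS,
        sub_self]
    · intro B hB
      funext i
      have h := hB.1 i
      rw [h, add_sub_cancel_left]
  · rintro B ⟨h1, h2⟩
    have h2' : ∑ i, (V i)ᴴ * (B i)ᴴ = 0 := by
      have := congrArg Matrix.conjTranspose h2
      simpa [Matrix.conjTranspose_sum] using this
    have hWi : ∀ i, W i = V i * S⁻¹ + (B i)ᴴ := by
      intro i
      have := congrArg Matrix.conjTranspose (h1 i)
      simpa [hinvH] using this
    have key : ∑ i, (W i)ᴴ * W i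
        = ∑ i, (V i * S⁻¹)ᴴ * (V i * S⁻¹) + ∑ i, B i * (B i)ᴴ := by
      rw [← Finset.sum_add_distrib]
      have step1 : ∑ i, (W i)ᴴ * W i
          = ∑ i, (S⁻¹ * (V i)ᴴ + B i) * (V i * S⁻¹ + (B i)ᴴ) :=
        Finset.sum_congr rfl fun i _ => by rw [h1 i, hWi i]
      rw [step1]
      · have expand : ∀ i ∈ Finset.univ,
            (S⁻¹ * (V i)ᴴ + B i) * (V i * S⁻¹ + (B i)ᴴ)
            = (V i * S⁻¹)ᴴ * (V i * S⁻¹) + B i * (B i)ᴴ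
              + (S⁻¹ * ((V i)ᴴ * (B i)ᴴ) + B i * V i * S⁻¹) := by
          intro i _
          have : (V i * S⁻¹)ᴴ = S⁻¹ * (V i)ᴴ := by
            rw [Matrix.conjTranspose_mul, hinvH]
          rw [this]
          rw [Matrix.add_mul, Matrix.mul_add, Matrix.mul_add, Matrix.mul_assoc,
            Matrix.mul_assoc (S⁻¹) ((V i)ᴴ) ((B i)ᴴ), Matrix.mul_assoc (B i) (V i) (S⁻¹)]
          abel
        rw [Finset.sum_congr rfl expand]
        simp only [Finset.sum_add_distrib]
        rw [← Finset.mul_sum, h2', ← Finset.sum_mul, h2]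
        simp
    rw [key, Matrix.trace_add]
    congr 1
    rw [Matrix.trace_sum]
    push_cast
    refine Finset.sum_congr rfl fun i _ => ?_
    rw [Matrix.trace]
    refine Finset.sum_congr rfl fun a _ => ?_
    rw [Matrix.diag_apply, Matrix.mul_apply]
    refine Finset.sum_congr rfl fun b _ => ?_
    rw [Matrix.conjTranspose_apply, RCLike.star_def, Complex.mul_conj]
    norm_cast
    rw [Complex.normSq_eq_norm_sq]
end

section
/- Let V be a reconstruction system on ℂ^d and W any dual system of V. Then tr(S_W²) ≥ tr(S_V⁻²) = Σ_{i=1}^d λ_i(S_V)⁻², with equality if and only if W = V^# (the canonical dual). -/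
open Matrix
open scoped ComplexOrder

/-- `μ : ι → ℝ` lists the eigenvalues (with multiplicity, in some order) of the
Hermitian matrix `A`. -/
def HasSpectrum {n : ℕ} {ι : Type*} [Fintype ι]
    (A : Matrix (Fin n) (Fin n) ℂ) (μ : ι → ℝ) : Prop :=
  ∃ hA : A.IsHermitian, ∃ e : Fin n ≃ ι, ∀ i, hA.eigenvalues i = μ (e i)

lemma trace_ctms_re {p q : ℕ} (B : Matrix (Fin p) (Fin q) ℂ) :
    (Matrix.trace (Bᴴ * B)).re = ∑ j, ∑ i, Complex.normSq (B i j) := by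
  have h : Matrix.trace (Bᴴ * B) = ((∑ j, ∑ i, Complex.normSq (B i j) : ℝ) : ℂ) := by
    rw [Matrix.trace]
    push_cast
    refine Finset.sum_congr rfl fun j _ => ?_
    rw [Matrix.diag, Matrix.mul_apply]
    refine Finset.sum_congr rfl fun i _ => ?_
    rw [Matrix.conjTranspose_apply, Complex.normSq_eq_conj_mul_self]; rfl
  rw [h, Complex.ofReal_re]

lemma trace_ctms_nonneg {p q : ℕ} (B : Matrix (Fin p) (Fin q) ℂ) :
    0 ≤ (Matrix.trace (Bᴴ * B)).re := by
  rw [trace_ctms_re]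
  exact Finset.sum_nonneg fun j _ => Finset.sum_nonneg fun i _ => Complex.normSq_nonneg _

lemma eq_zero_of_trace_ctms {p q : ℕ} (B : Matrix (Fin p) (Fin q) ℂ)
    (h : (Matrix.trace (Bᴴ * B)).re = 0) : B = 0 := by
  rw [trace_ctms_re] at h
  ext i j
  have h1 := (Finset.sum_eq_zero_iff_of_nonneg (fun j _ => Finset.sum_nonneg
    (fun i _ => Complex.normSq_nonneg (B i j)))).mp h j (Finset.mem_univ j)
  have h2 := (Finset.sum_eq_zero_iff_of_nonneg
    (fun i _ => Complex.normSq_nonneg (B i j))).mp h1 i (Finset.mem_univ i)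
  simpa [Complex.normSq_eq_zero] using h2

lemma trace_cycle_aux {d p q : ℕ} (A : Matrix (Fin p) (Fin d) ℂ) (B : Matrix (Fin q) (Fin d) ℂ) :
    Matrix.trace (Aᴴ * A * ((B)ᴴ * B)) = Matrix.trace ((B * Aᴴ)ᴴ * (B * Aᴴ)) := by
  rw [conjTranspose_mul, conjTranspose_conjTranspose]
  calc Matrix.trace (Aᴴ * A * (Bᴴ * B))
      = Matrix.trace (Aᴴ * (A * (Bᴴ * B))) := by rw [Matrix.mul_assoc]
    _ = Matrix.trace ((A * (Bᴴ * B)) * Aᴴ) := Matrix.trace_mul_comm _ _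
    _ = Matrix.trace (A * Bᴴ * (B * Aᴴ)) := by simp only [Matrix.mul_assoc]

lemma spectrum_aux (d : ℕ) (S : Matrix (Fin d) (Fin d) ℂ) (hSpd : S.PosDef)
    (lam : Fin d → ℝ) (hA : S.IsHermitian) (e : Fin d ≃ Fin d)
    (he : ∀ i, hA.eigenvalues i = lam (e i)) :
    (Matrix.trace (S⁻¹ * S⁻¹)).re = ∑ i, (lam i)⁻¹ ^ 2 := by
  classical
  set U : Matrix (Fin d) (Fin d) ℂ := (hA.eigenvectorUnitary : Matrix (Fin d) (Fin d) ℂ) with hU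
  have hUU : star U * U = 1 := Matrix.UnitaryGroup.star_mul_self _
  have hUU' : U * star U = 1 := mul_eq_one_comm.mp hUU
  set Dg : Matrix (Fin d) (Fin d) ℂ := diagonal (RCLike.ofReal ∘ hA.eigenvalues) with hDg
  set Dg' : Matrix (Fin d) (Fin d) ℂ :=
    diagonal (fun i => (((hA.eigenvalues i)⁻¹ : ℝ) : ℂ)) with hDg'
  have hDD' : Dg * Dg' = 1 := by
    rw [hDg, hDg', diagonal_mul_diagonal]
    have hfun : (fun i => (RCLike.ofReal ∘ hA.eigenvalues) i * (((hA.eigenvalues i)⁻¹ : ℝ) : ℂ))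
        = fun _ => (1 : ℂ) := by
      funext i
      have hne : hA.eigenvalues i ≠ 0 := (hSpd.eigenvalues_pos i).ne'
      show (hA.eigenvalues i : ℂ) * ((hA.eigenvalues i)⁻¹ : ℝ) = 1
      rw [← Complex.ofReal_mul, mul_inv_cancel₀ hne, Complex.ofReal_one]
    rw [hfun, diagonal_one]
  have hspec : S = U * Dg * star U := hA.spectral_theorem
  have hSinv : S⁻¹ = U * Dg' * star U := by
    apply Matrix.inv_eq_right_inv
    rw [hspec]
    calc U * Dg * star U * (U * Dg' * star U)
        = U * (Dg * ((star U * U) * Dg')) * star U := by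
          simp only [Matrix.mul_assoc]
      _ = 1 := by rw [hUU, Matrix.one_mul, hDD', Matrix.mul_one, hUU']
  have htr : Matrix.trace (S⁻¹ * S⁻¹) = Matrix.trace (Dg' * Dg') := by
    rw [hSinv]
    calc Matrix.trace (U * Dg' * star U * (U * Dg' * star U))
        = Matrix.trace (U * (Dg' * ((star U * U) * Dg')) * star U) := by
          simp only [Matrix.mul_assoc]
      _ = Matrix.trace (U * (Dg' * Dg') * star U) := by rw [hUU, Matrix.one_mul]
      _ = Matrix.trace (star U * U * (Dg' * Dg')) := by rw [Matrix.trace_mul_cycle]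
      _ = Matrix.trace (Dg' * Dg') := by rw [hUU, Matrix.one_mul]
  rw [htr, hDg', diagonal_mul_diagonal, Matrix.trace_diagonal]
  rw [← Equiv.sum_comp e (fun j => (lam j)⁻¹ ^ 2)]
  rw [Complex.re_sum]
  refine Finset.sum_congr rfl fun i _ => ?_
  rw [← he i, ← Complex.ofReal_mul, Complex.ofReal_re, sq]

lemma main_aux
    (d m : ℕ) (k : Fin m → ℕ)
    (V W : ∀ i : Fin m, Matrix (Fin (k i)) (Fin d) ℂ)
    (S : Matrix (Fin d) (Fin d) ℂ) (hS : S = ∑ i, (V i)ᴴ * V i)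
    (hSpd : S.PosDef)
    (hdual : ∑ i, (W i)ᴴ * V i = 1)
    (SW : Matrix (Fin d) (Fin d) ℂ) (hSW : SW = ∑ i, (W i)ᴴ * W i) :
    (Matrix.trace (S⁻¹ * S⁻¹)).re ≤ (Matrix.trace (SW * SW)).re
    ∧ ((Matrix.trace (SW * SW)).re = (Matrix.trace (S⁻¹ * S⁻¹)).re
        ↔ ∀ i, W i = V i * S⁻¹) := by
  classical
  have hdet : IsUnit S.det := (Matrix.isUnit_iff_isUnit_det S).mp hSpd.isUnit
  have hSinv_mul : S⁻¹ * S = 1 := Matrix.nonsing_inv_mul S hdet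
  have hmul_Sinv : S * S⁻¹ = 1 := Matrix.mul_nonsing_inv S hdet
  have hSH : Sᴴ = S := hSpd.1
  have hSinvH : (S⁻¹)ᴴ = S⁻¹ := by rw [Matrix.conjTranspose_nonsing_inv, hSH]
  set D : ∀ i : Fin m, Matrix (Fin (k i)) (Fin d) ℂ := fun i => W i - V i * S⁻¹ with hDdef
  have hDV : ∑ i, (D i)ᴴ * V i = 0 := by
    have h1 : ∑ i, (D i)ᴴ * V i
        = (∑ i, (W i)ᴴ * V i) - S⁻¹ * ∑ i, (V i)ᴴ * V i := by
      rw [Finset.mul_sum, ← Finset.sum_sub_distrib]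
      refine Finset.sum_congr rfl fun i _ => ?_
      simp [hDdef, conjTranspose_sub, conjTranspose_mul, hSinvH, Matrix.sub_mul,
        Matrix.mul_assoc]
    rw [h1, hdual, ← hS, hSinv_mul, sub_self]
  have hVD : ∑ i, (V i)ᴴ * D i = 0 := by
    have h2 := congrArg conjTranspose hDV
    simpa [conjTranspose_sum, conjTranspose_mul] using h2
  set T : Matrix (Fin d) (Fin d) ℂ := ∑ i, (D i)ᴴ * D i with hTdef
  have hSWT : SW = S⁻¹ + T := by
    have key : ∀ i : Fin m, (W i)ᴴ * W i
        = S⁻¹ * ((V i)ᴴ * V i) * S⁻¹ + S⁻¹ * ((V i)ᴴ * D i)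
          + ((D i)ᴴ * V i) * S⁻¹ + (D i)ᴴ * D i := by
      intro i
      have hWi : W i = V i * S⁻¹ + D i := by simp [hDdef]
      rw [hWi]
      simp only [conjTranspose_add, conjTranspose_mul, hSinvH, Matrix.add_mul, Matrix.mul_add,
        Matrix.mul_assoc]
      abel
    rw [hSW]
    calc ∑ i, (W i)ᴴ * W i
        = S⁻¹ * (∑ i, (V i)ᴴ * V i) * S⁻¹ + S⁻¹ * (∑ i, (V i)ᴴ * D i)
          + (∑ i, (D i)ᴴ * V i) * S⁻¹ + T := by
          simp only [key, Finset.sum_add_distrib, hTdef, Finset.mul_sum, Finset.sum_mul,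
            Matrix.mul_assoc]
      _ = S⁻¹ + T := by
          rw [hVD, hDV, ← hS, Matrix.mul_zero, Matrix.zero_mul, add_zero, add_zero,
            Matrix.mul_assoc, hmul_Sinv, Matrix.mul_one]
  -- get C with S⁻¹ = Cᴴ * C
  obtain ⟨C, hC⟩ : ∃ C : Matrix (Fin d) (Fin d) ℂ, S⁻¹ = Cᴴ * C := by
    open scoped MatrixOrder Matrix.Norms.L2Operator in
    exact CStarAlgebra.nonneg_iff_eq_star_mul_self.mp hSpd.inv.posSemidef.nonneg
  -- X_i and nonnegativity
  have htrST : (Matrix.trace (S⁻¹ * T)).re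
      = ∑ i, (Matrix.trace ((D i * Cᴴ)ᴴ * (D i * Cᴴ))).re := by
    rw [hTdef, Finset.mul_sum, Matrix.trace_sum, Complex.re_sum]
    refine Finset.sum_congr rfl fun i _ => ?_
    rw [hC, trace_cycle_aux]
  have hX : 0 ≤ (Matrix.trace (S⁻¹ * T)).re := by
    rw [htrST]
    exact Finset.sum_nonneg fun i _ => trace_ctms_nonneg _
  have htrTT : (Matrix.trace (T * T)).re
      = ∑ i, ∑ j, (Matrix.trace ((D j * (D i)ᴴ)ᴴ * (D j * (D i)ᴴ))).re := by
    rw [hTdef, Finset.sum_mul, Matrix.trace_sum, Complex.re_sum]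
    refine Finset.sum_congr rfl fun i _ => ?_
    rw [Finset.mul_sum, Matrix.trace_sum, Complex.re_sum]
    refine Finset.sum_congr rfl fun j _ => ?_
    rw [trace_cycle_aux]
  have hY : 0 ≤ (Matrix.trace (T * T)).re := by
    rw [htrTT]
    exact Finset.sum_nonneg fun i _ => Finset.sum_nonneg fun j _ => trace_ctms_nonneg _
  have hmain : (Matrix.trace (SW * SW)).re
      = (Matrix.trace (S⁻¹ * S⁻¹)).re + 2 * (Matrix.trace (S⁻¹ * T)).re
        + (Matrix.trace (T * T)).re := by
    rw [hSWT]
    have : (S⁻¹ + T) * (S⁻¹ + T) = S⁻¹ * S⁻¹ + S⁻¹ * T + T * S⁻¹ + T * T := by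
      simp only [Matrix.add_mul, Matrix.mul_add]; abel
    rw [this, Matrix.trace_add, Matrix.trace_add, Matrix.trace_add,
      Matrix.trace_mul_comm T S⁻¹]
    simp [Complex.add_re]
    ring
  constructor
  · rw [hmain]; linarith
  · constructor
    · intro heq
      have hX0 : (Matrix.trace (S⁻¹ * T)).re = 0 := by
        rw [hmain] at heq; linarith
      intro i
      have hterm : ∀ j, (Matrix.trace ((D j * Cᴴ)ᴴ * (D j * Cᴴ))).re = 0 := by
        rw [htrST] at hX0
        intro j
        exact (Finset.sum_eq_zero_iff_of_nonneg
          (fun j _ => trace_ctms_nonneg _)).mp hX0 j (Finset.mem_univ j)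
      have hDC : D i * Cᴴ = 0 := eq_zero_of_trace_ctms _ (hterm i)
      have hDS : D i * S⁻¹ = 0 := by
        rw [hC, ← Matrix.mul_assoc, hDC, Matrix.zero_mul]
      have hDi : D i = 0 := by
        have := congrArg (· * S) hDS
        simpa [Matrix.mul_assoc, hSinv_mul] using this
      have := sub_eq_zero.mp (by simpa [hDdef] using hDi)
      exact this
    · intro h
      have hT0 : T = 0 := by
        rw [hTdef]
        refine Finset.sum_eq_zero fun i _ => ?_
        have : D i = 0 := by simp [hDdef, h i]
        rw [this, conjTranspose_zero, Matrix.mul_zero]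
      rw [hSWT, hT0, add_zero]

/-- For every dual system `W` of a reconstruction system `V`,
`tr(S_W²) ≥ tr(S_V⁻²) = ∑ᵢ λᵢ(S_V)⁻²`, with equality iff `W = V^#` is the canonical
dual. -/
theorem canonical_dual_minimizes_potential
    (d m : ℕ) (k : Fin m → ℕ)
    (V W : ∀ i : Fin m, Matrix (Fin (k i)) (Fin d) ℂ)
    (S : Matrix (Fin d) (Fin d) ℂ) (hS : S = ∑ i, (V i)ᴴ * V i)
    (hSpd : S.PosDef)
    (hdual : ∑ i, (W i)ᴴ * V i = 1)
    (SW : Matrix (Fin d) (Fin d) ℂ) (hSW : SW = ∑ i, (W i)ᴴ * W i) :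
    (Matrix.trace (S⁻¹ * S⁻¹)).re ≤ (Matrix.trace (SW * SW)).re
    ∧ (∀ lam : Fin d → ℝ, HasSpectrum S lam →
        (Matrix.trace (S⁻¹ * S⁻¹)).re = ∑ i, (lam i) ⁻¹ ^ 2)
    ∧ ((Matrix.trace (SW * SW)).re = (Matrix.trace (S⁻¹ * S⁻¹)).re
        ↔ ∀ i, W i = V i * S⁻¹) := by
  obtain ⟨hle, hiff⟩ := main_aux d m k V W S hS hSpd hdual SW hSW
  refine ⟨hle, fun lam hlam => ?_, hiff⟩
  obtain ⟨hA, e, he⟩ := hlam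
  exact spectrum_aux d S hSpd lam hA e he
end

section
/- Let V be a reconstruction system on ℂ^d with n = Σ k_i ≥ 2d. Then a strictly positive decreasing vector μ ∈ ℝ^d is the spectrum of S_W for some dual system W of V if and only if μ_j ≥ λ_{d−j+1}(S_V)⁻¹ for every j ∈ {1,...,d}, where λ_1(S_V) ≥ ... ≥ λ_d(S_V) are the eigenvalues of S_V. -/
open Matrix
open scoped ComplexOrder

section Helpers

/-- blocks to big matrix -/
lemma sum_block_conjTranspose_mul {d m : ℕ} {k : Fin m → ℕ}
    (X Y : ∀ i : Fin m, Matrix (Fin (k i)) (Fin d) ℂ) :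
    ∑ i, (X i)ᴴ * Y i =
      (Matrix.of (fun (p : Σ i : Fin m, Fin (k i)) (j : Fin d) => X p.1 p.2 j))ᴴ *
      (Matrix.of (fun (p : Σ i : Fin m, Fin (k i)) (j : Fin d) => Y p.1 p.2 j)) := by
  ext a b
  simp only [Matrix.sum_apply, Matrix.mul_apply, Matrix.conjTranspose_apply, Matrix.of_apply]
  rw [← Finset.univ_sigma_univ, Finset.sum_sigma]

/-- multiset equality gives a permutation -/
lemma exists_perm_of_multiset_map_eq {n : ℕ} (f g : Fin n → ℝ)
    (h : Finset.univ.val.map f = Finset.univ.val.map g) :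
    ∃ σ : Equiv.Perm (Fin n), f = g ∘ σ := by
  have hperm : (List.ofFn f).Perm (List.ofFn g) := by
    rw [← Multiset.coe_eq_coe]
    simpa [List.ofFn_eq_map, ← Multiset.map_coe] using h
  have h1 : (List.ofFn (f ∘ Tuple.sort f)).Perm (List.ofFn (g ∘ Tuple.sort g)) :=
    ((Tuple.sort f).ofFn_comp_perm f).trans (hperm.trans ((Tuple.sort g).ofFn_comp_perm g).symm)
  have h2 : List.ofFn (f ∘ Tuple.sort f) = List.ofFn (g ∘ Tuple.sort g) :=
    List.Perm.eq_of_sortedLE (Tuple.monotone_sort f).sortedLE_ofFn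
      (Tuple.monotone_sort g).sortedLE_ofFn h1
  have h3 : f ∘ Tuple.sort f = g ∘ Tuple.sort g := List.ofFn_injective h2
  refine ⟨((Tuple.sort f)⁻¹).trans (Tuple.sort g), funext fun i => ?_⟩
  have := congrFun h3 ((Tuple.sort f)⁻¹ i)
  simpa using this

lemma det_smul_one_sub_unitary_diag {d : ℕ} (U : Matrix (Fin d) (Fin d) ℂ)
    (hU : U ∈ Matrix.unitaryGroup (Fin d) ℂ) (a : Fin d → ℝ) (t : ℂ) :
    Matrix.det (t • (1 : Matrix (Fin d) (Fin d) ℂ) - U * Matrix.diagonal (fun i => (a i : ℂ)) * Uᴴ)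
      = ∏ i, (t - (a i : ℂ)) := by
  have hUU : U * Uᴴ = 1 := by
    rw [← Matrix.star_eq_conjTranspose]; exact Matrix.mem_unitaryGroup_iff.mp hU
  have key : t • (1 : Matrix (Fin d) (Fin d) ℂ) - U * Matrix.diagonal (fun i => (a i : ℂ)) * Uᴴ
      = U * Matrix.diagonal (fun i => t - (a i : ℂ)) * Uᴴ := by
    have h1 : t • (1 : Matrix (Fin d) (Fin d) ℂ) = U * (t • (1:Matrix (Fin d) (Fin d) ℂ)) * Uᴴ := by
      rw [Matrix.mul_smul, Matrix.smul_mul, Matrix.mul_one, hUU]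
    rw [h1, ← Matrix.sub_mul, ← Matrix.mul_sub, Matrix.smul_one_eq_diagonal,
      Matrix.diagonal_sub]
  have hUU' : Uᴴ * U = 1 := by
    rw [← Matrix.star_eq_conjTranspose]; exact Matrix.mem_unitaryGroup_iff'.mp hU
  rw [key, Matrix.det_mul, Matrix.det_mul, mul_comm, ← mul_assoc, ← Matrix.det_mul, hUU']
  simp [Matrix.det_diagonal]

lemma hasSpectrum_of_unitary_diag {d : ℕ} (A U : Matrix (Fin d) (Fin d) ℂ)
    (hU : U ∈ Matrix.unitaryGroup (Fin d) ℂ) (f : Fin d → ℝ)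
    (hAeq : A = U * Matrix.diagonal (fun i => (f i : ℂ)) * Uᴴ) :
    HasSpectrum A f := by
  have hdiagH : (Matrix.diagonal (fun i => (f i : ℂ)))ᴴ = Matrix.diagonal (fun i => (f i : ℂ)) := by
    rw [Matrix.diagonal_conjTranspose]
    congr 1
    funext i
    simp [Pi.star_def]
  have hA : A.IsHermitian := by
    rw [hAeq]
    unfold Matrix.IsHermitian
    rw [Matrix.conjTranspose_mul, Matrix.conjTranspose_mul, hdiagH,
      Matrix.conjTranspose_conjTranspose, Matrix.mul_assoc]
  -- the two "charpoly"s agree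
  have heval : ∀ t : ℂ, (∏ i, (Polynomial.X - Polynomial.C ((f i : ℂ)))).eval t
      = (∏ i, (Polynomial.X - Polynomial.C ((hA.eigenvalues i : ℂ)))).eval t := by
    intro t
    have e1 := det_smul_one_sub_unitary_diag U hU f t
    have e2 := det_smul_one_sub_unitary_diag (hA.eigenvectorUnitary : Matrix (Fin d) (Fin d) ℂ)
      hA.eigenvectorUnitary.2 hA.eigenvalues t
    have hAeq2 : A = (hA.eigenvectorUnitary : Matrix (Fin d) (Fin d) ℂ) *
        Matrix.diagonal (fun i => ((hA.eigenvalues i : ℂ))) *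
        (hA.eigenvectorUnitary : Matrix (Fin d) (Fin d) ℂ)ᴴ := by
      simpa [Matrix.star_eq_conjTranspose, Function.comp_def] using hA.spectral_theorem
    simp only [Polynomial.eval_prod, Polynomial.eval_sub, Polynomial.eval_X, Polynomial.eval_C]
    rw [← e1, ← e2, ← hAeq, ← hAeq2]
  have hpoly := Polynomial.funext heval
  have hroots : (Finset.univ.val.map (fun i => ((f i : ℂ)))) =
      (Finset.univ.val.map (fun i => ((hA.eigenvalues i : ℂ)))) := by
    have r1 : (∏ i, (Polynomial.X - Polynomial.C ((f i : ℂ)))).roots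
        = Finset.univ.val.map (fun i => ((f i : ℂ))) := by
      rw [Finset.prod_eq_multiset_prod]
      have : Multiset.map (fun i => Polynomial.X - Polynomial.C ((f i : ℂ))) Finset.univ.val
          = Multiset.map (fun a => Polynomial.X - Polynomial.C a)
            (Multiset.map (fun i => ((f i : ℂ))) Finset.univ.val) := by
        rw [Multiset.map_map]; rfl
      rw [this]
      exact Polynomial.roots_multiset_prod_X_sub_C _
    have r2 : (∏ i, (Polynomial.X - Polynomial.C ((hA.eigenvalues i : ℂ)))).roots
        = Finset.univ.val.map (fun i => ((hA.eigenvalues i : ℂ))) := by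
      rw [Finset.prod_eq_multiset_prod]
      have : Multiset.map (fun i => Polynomial.X - Polynomial.C ((hA.eigenvalues i : ℂ))) Finset.univ.val
          = Multiset.map (fun a => Polynomial.X - Polynomial.C a)
            (Multiset.map (fun i => ((hA.eigenvalues i : ℂ))) Finset.univ.val) := by
        rw [Multiset.map_map]; rfl
      rw [this]
      exact Polynomial.roots_multiset_prod_X_sub_C _
    rw [← r1, ← r2, hpoly]
  have hrootsR : (Finset.univ.val.map hA.eigenvalues) = (Finset.univ.val.map f) := by
    apply Multiset.map_injective (Complex.ofReal_injective)
    rw [Multiset.map_map, Multiset.map_map]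
    exact hroots.symm
  obtain ⟨σ, hσ⟩ := exists_perm_of_multiset_map_eq _ _ hrootsR
  exact ⟨hA, σ, fun i => congrFun hσ i⟩

noncomputable section

variable {d : ℕ}

local notation "E" => EuclideanSpace ℂ (Fin d)

lemma eigen_apply {A : Matrix (Fin d) (Fin d) ℂ} (hA : A.IsHermitian) (i : Fin d) :
    (Matrix.toEuclideanLin A) (hA.eigenvectorBasis i)
      = (hA.eigenvalues i : ℂ) • hA.eigenvectorBasis i := by
  apply (WithLp.equiv 2 _).injective
  simp [Matrix.toEuclideanLin_apply, hA.mulVec_eigenvectorBasis i]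

lemma repr_toEuclideanLin {A : Matrix (Fin d) (Fin d) ℂ} (hA : A.IsHermitian) (v : E) (i : Fin d) :
    hA.eigenvectorBasis.repr ((Matrix.toEuclideanLin A) v) i
      = (hA.eigenvalues i : ℂ) * hA.eigenvectorBasis.repr v i := by
  rw [OrthonormalBasis.repr_apply_apply, OrthonormalBasis.repr_apply_apply]
  have hsym := (Matrix.isHermitian_iff_isSymmetric.1 hA)
  rw [← hsym (hA.eigenvectorBasis i) v, eigen_apply hA i, inner_smul_left]
  simp

/-- quadratic form in eigencoordinates -/
lemma re_inner_toEuclideanLin {A : Matrix (Fin d) (Fin d) ℂ} (hA : A.IsHermitian) (v : E) :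
    RCLike.re (inner ℂ v ((Matrix.toEuclideanLin A) v) : ℂ)
      = ∑ i, hA.eigenvalues i * ‖hA.eigenvectorBasis.repr v i‖ ^ 2 := by
  set b := hA.eigenvectorBasis
  have h1 : (inner ℂ v ((Matrix.toEuclideanLin A) v) : ℂ)
      = ∑ i, (starRingEnd ℂ) (b.repr v i) * b.repr ((Matrix.toEuclideanLin A) v) i := by
    rw [← b.repr.inner_map_map v ((Matrix.toEuclideanLin A) v), PiLp.inner_apply]
    simp only [RCLike.inner_apply, mul_comm]
  rw [h1]
  rw [map_sum]
  apply Finset.sum_congr rfl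
  intro i _
  rw [repr_toEuclideanLin hA v i]
  have : (starRingEnd ℂ) (b.repr v i) * ((hA.eigenvalues i : ℂ) * b.repr v i)
      = (hA.eigenvalues i : ℂ) * ((starRingEnd ℂ) (b.repr v i) * b.repr v i) := by ring
  rw [this, Complex.conj_mul']
  simp [← Complex.ofReal_pow]

lemma re_inner_self (v : E) {A : Matrix (Fin d) (Fin d) ℂ} (hA : A.IsHermitian) :
    RCLike.re (inner ℂ v v : ℂ) = ∑ i, ‖hA.eigenvectorBasis.repr v i‖ ^ 2 := by
  set b := hA.eigenvectorBasis
  have h1 : (inner ℂ v v : ℂ) = ∑ i, (starRingEnd ℂ) (b.repr v i) * b.repr v i := by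
    rw [← b.repr.inner_map_map v v, PiLp.inner_apply]; simp only [RCLike.inner_apply, mul_comm]
  rw [h1, map_sum]
  apply Finset.sum_congr rfl
  intro i _
  rw [Complex.conj_mul']
  simp [← Complex.ofReal_pow]

/-- repr vanishes outside the spanning set -/
lemma repr_eq_zero_of_mem_span {b : OrthonormalBasis (Fin d) ℂ E} {s : Finset (Fin d)} {v : E}
    (hv : v ∈ Submodule.span ℂ (⇑b '' ↑s)) {i : Fin d} (hi : i ∉ s) :
    b.repr v i = 0 := by
  rw [OrthonormalBasis.repr_apply_apply]
  rw [← Submodule.mem_orthogonal_singleton_iff_inner_right]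
  refine Submodule.span_le.mpr ?_ hv
  rintro x ⟨j, hj, rfl⟩
  rw [SetLike.mem_coe, Submodule.mem_orthogonal_singleton_iff_inner_left]
  exact b.orthonormal.2 (fun h => hi (h ▸ hj))

lemma finrank_span_orthonormal {b : OrthonormalBasis (Fin d) ℂ E} (s : Finset (Fin d)) :
    Module.finrank ℂ (Submodule.span ℂ (⇑b '' ↑s)) = s.card := by
  have hon : Orthonormal ℂ (⇑b ∘ (Subtype.val : {x // x ∈ s} → Fin d)) :=
    b.orthonormal.comp _ Subtype.val_injective
  have hrange : Submodule.span ℂ (⇑b '' ↑s)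
      = Submodule.span ℂ (Set.range (⇑b ∘ (Subtype.val : {x // x ∈ s} → Fin d))) := by
    rw [Set.range_comp, Subtype.range_coe]
  rw [hrange, finrank_span_eq_card hon.linearIndependent, Fintype.card_coe]

end

noncomputable section
variable {d : ℕ}

lemma inner_toEuclideanLin_eq_dot (M : Matrix (Fin d) (Fin d) ℂ) (v : EuclideanSpace ℂ (Fin d)) :
    (inner ℂ v ((Matrix.toEuclideanLin M) v) : ℂ)
      = dotProduct (star ((WithLp.equiv 2 _) v)) (M *ᵥ ((WithLp.equiv 2 _) v)) := by
  rw [EuclideanSpace.inner_eq_star_dotProduct, dotProduct_comm]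
  congr 1

lemma weyl_monotone {A B : Matrix (Fin d) (Fin d) ℂ}
    (hAB : (A - B).PosSemidef) {α β : Fin d → ℝ} (hα : Antitone α) (hβ : Antitone β)
    (hA : A.IsHermitian) (eA : Fin d ≃ Fin d) (heA : ∀ i, hA.eigenvalues i = α (eA i))
    (hB : B.IsHermitian) (eB : Fin d ≃ Fin d) (heB : ∀ i, hB.eigenvalues i = β (eB i))
    (j : Fin d) : β j ≤ α j := by
  classical
  set sB : Finset (Fin d) := Finset.univ.filter (fun i => eB i ≤ j) with hsB
  set sA : Finset (Fin d) := Finset.univ.filter (fun i => j ≤ eA i) with hsA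
  have hcardB : sB.card = (j : ℕ) + 1 := by
    rw [Finset.card_equiv (t := Finset.Iic j) eB (fun i => by simp [hsB, Finset.mem_Iic])]
    exact Fin.card_Iic j
  have hcardA : sA.card = d - (j : ℕ) := by
    rw [Finset.card_equiv (t := Finset.Ici j) eA (fun i => by simp [hsA, Finset.mem_Ici])]
    exact Fin.card_Ici j
  set UB := Submodule.span ℂ (⇑hB.eigenvectorBasis '' ↑sB) with hUB
  set UA := Submodule.span ℂ (⇑hA.eigenvectorBasis '' ↑sA) with hUA
  have hfB : Module.finrank ℂ UB = (j : ℕ) + 1 := by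
    rw [hUB, finrank_span_orthonormal, hcardB]
  have hfA : Module.finrank ℂ UA = d - (j : ℕ) := by
    rw [hUA, finrank_span_orthonormal, hcardA]
  have hEdim : Module.finrank ℂ (EuclideanSpace ℂ (Fin d)) = d := by
    simp [finrank_euclideanSpace]
  have hsup : Module.finrank ℂ ↥(UA ⊔ UB) ≤ d := by
    have := Submodule.finrank_le (UA ⊔ UB)
    rwa [hEdim] at this
  have hinf : 0 < Module.finrank ℂ ↥(UA ⊓ UB) := by
    have := Submodule.finrank_sup_add_finrank_inf_eq UA UB
    rw [hfA, hfB] at this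
    omega
  have : Nontrivial ↥(UA ⊓ UB) := Module.finrank_pos_iff.mp hinf
  obtain ⟨w, hw0⟩ := exists_ne (0 : ↥(UA ⊓ UB))
  obtain ⟨hvA, hvB⟩ := Submodule.mem_inf.mp w.2
  set v : EuclideanSpace ℂ (Fin d) := (w : EuclideanSpace ℂ (Fin d)) with hv
  have hvne : v ≠ 0 := fun h => hw0 (Subtype.ext h)
  -- lower bound
  have hlow : β j * RCLike.re (inner ℂ v v : ℂ)
      ≤ RCLike.re (inner ℂ v ((Matrix.toEuclideanLin B) v) : ℂ) := by
    rw [re_inner_toEuclideanLin hB v, re_inner_self v hB, Finset.mul_sum]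
    apply Finset.sum_le_sum
    intro i _
    by_cases his : i ∈ sB
    · have : eB i ≤ j := by simpa [hsB] using his
      have := hβ this
      rw [heB i] at *
      nlinarith [sq_nonneg ‖hB.eigenvectorBasis.repr v i‖]
    · rw [repr_eq_zero_of_mem_span hvB his]
      simp
  -- upper bound
  have hup : RCLike.re (inner ℂ v ((Matrix.toEuclideanLin A) v) : ℂ)
      ≤ α j * RCLike.re (inner ℂ v v : ℂ) := by
    rw [re_inner_toEuclideanLin hA v, re_inner_self v hA, Finset.mul_sum]
    apply Finset.sum_le_sum
    intro i _
    by_cases his : i ∈ sA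
    · have : j ≤ eA i := by simpa [hsA] using his
      have := hα this
      rw [heA i] at *
      nlinarith [sq_nonneg ‖hA.eigenvectorBasis.repr v i‖]
    · rw [repr_eq_zero_of_mem_span hvA his]
      simp
  -- middle
  have hmid : RCLike.re (inner ℂ v ((Matrix.toEuclideanLin B) v) : ℂ)
      ≤ RCLike.re (inner ℂ v ((Matrix.toEuclideanLin A) v) : ℂ) := by
    have hq := hAB.dotProduct_mulVec_nonneg ((WithLp.equiv 2 _) v)
    rw [Matrix.sub_mulVec, dotProduct_sub] at hq
    have := (Complex.le_def.mp hq).1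
    rw [inner_toEuclideanLin_eq_dot, inner_toEuclideanLin_eq_dot]
    simp only [Complex.sub_re, Complex.zero_re] at this
    simp only [RCLike.re_to_complex]
    linarith
  have hP : 0 < RCLike.re (inner ℂ v v : ℂ) := by
    rw [inner_self_eq_norm_sq]
    exact pow_pos (norm_pos_iff.mpr hvne) 2
  have := (hlow.trans hmid).trans hup
  exact le_of_mul_le_mul_right (by linarith [this]) hP

noncomputable section

variable {d : ℕ}

lemma inv_spectral {S : Matrix (Fin d) (Fin d) ℂ} (hSpd : S.PosDef) :
    S⁻¹ = (hSpd.1.eigenvectorUnitary : Matrix (Fin d) (Fin d) ℂ) *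
      Matrix.diagonal (fun i => (((hSpd.1.eigenvalues i)⁻¹ : ℝ) : ℂ)) *
      (hSpd.1.eigenvectorUnitary : Matrix (Fin d) (Fin d) ℂ)ᴴ := by
  set U := (hSpd.1.eigenvectorUnitary : Matrix (Fin d) (Fin d) ℂ) with hU
  have hUU : Uᴴ * U = 1 := by
    rw [← Matrix.star_eq_conjTranspose]
    exact Matrix.mem_unitaryGroup_iff'.mp hSpd.1.eigenvectorUnitary.2
  have hUU' : U * Uᴴ = 1 := by
    rw [← Matrix.star_eq_conjTranspose]
    exact Matrix.mem_unitaryGroup_iff.mp hSpd.1.eigenvectorUnitary.2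
  have hSeq : S = U * Matrix.diagonal (fun i => ((hSpd.1.eigenvalues i : ℝ) : ℂ)) * Uᴴ := by
    simpa [Matrix.star_eq_conjTranspose, Function.comp_def] using hSpd.1.spectral_theorem
  apply Matrix.inv_eq_left_inv
  have step1 : (U * Matrix.diagonal (fun i => (((hSpd.1.eigenvalues i)⁻¹ : ℝ) : ℂ)) * Uᴴ) *
      (U * Matrix.diagonal (fun i => ((hSpd.1.eigenvalues i : ℝ) : ℂ)) * Uᴴ)
      = U * (Matrix.diagonal (fun i => (((hSpd.1.eigenvalues i)⁻¹ : ℝ) : ℂ)) *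
          (Uᴴ * U) * Matrix.diagonal (fun i => ((hSpd.1.eigenvalues i : ℝ) : ℂ))) * Uᴴ := by
    simp only [Matrix.mul_assoc]
  have step2 : U * (Matrix.diagonal (fun i => (((hSpd.1.eigenvalues i)⁻¹ : ℝ) : ℂ)) *
          (Uᴴ * U) * Matrix.diagonal (fun i => ((hSpd.1.eigenvalues i : ℝ) : ℂ))) * Uᴴ
      = U * Uᴴ := by
    rw [hUU, Matrix.mul_one, Matrix.diagonal_mul_diagonal]
    have : (fun i => (((hSpd.1.eigenvalues i)⁻¹ : ℝ) : ℂ) * ((hSpd.1.eigenvalues i : ℝ) : ℂ))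
        = fun _ => (1 : ℂ) := by
      funext i
      have h0 : (hSpd.1.eigenvalues i) ≠ 0 := (hSpd.eigenvalues_pos i).ne'
      rw [← Complex.ofReal_mul, inv_mul_cancel₀ h0, Complex.ofReal_one]
    rw [this, Matrix.diagonal_one, Matrix.mul_one]
  have hMS : (U * Matrix.diagonal (fun i => (((hSpd.1.eigenvalues i)⁻¹ : ℝ) : ℂ)) * Uᴴ) * S
      = (U * Matrix.diagonal (fun i => (((hSpd.1.eigenvalues i)⁻¹ : ℝ) : ℂ)) * Uᴴ) *
        (U * Matrix.diagonal (fun i => ((hSpd.1.eigenvalues i : ℝ) : ℂ)) * Uᴴ) :=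
    congrArg (fun X => (U * Matrix.diagonal (fun i => (((hSpd.1.eigenvalues i)⁻¹ : ℝ) : ℂ)) * Uᴴ) * X) hSeq
  rw [hMS, step1, step2]
  exact hUU'

lemma psd_sub_of_dual {ι : Type*} [Fintype ι] {Vb Z : Matrix ι (Fin d) ℂ}
    {S : Matrix (Fin d) (Fin d) ℂ} (hS : S = Vbᴴ * Vb) (hSpd : S.PosDef)
    (hdual : Zᴴ * Vb = 1) : (Zᴴ * Z - S⁻¹).PosSemidef := by
  have hdet : IsUnit S.det := hSpd.det_pos.ne'.isUnit
  have h1 : Vbᴴ * Z = 1 := by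
    have := congrArg Matrix.conjTranspose hdual
    simpa using this
  have hSinvH : S⁻¹ᴴ = S⁻¹ := hSpd.1.inv
  have hform : Zᴴ * Z - S⁻¹ = (Z - Vb * S⁻¹)ᴴ * (Z - Vb * S⁻¹) := by
    rw [Matrix.conjTranspose_sub, Matrix.conjTranspose_mul, hSinvH, Matrix.sub_mul,
      Matrix.mul_sub, Matrix.mul_sub]
    rw [← Matrix.mul_assoc Zᴴ Vb S⁻¹, hdual, Matrix.one_mul]
    rw [Matrix.mul_assoc S⁻¹ Vbᴴ Z, h1, Matrix.mul_one]
    have : S⁻¹ * Vbᴴ * (Vb * S⁻¹) = S⁻¹ := by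
      rw [Matrix.mul_assoc S⁻¹ Vbᴴ _, ← Matrix.mul_assoc Vbᴴ Vb S⁻¹, ← hS,
        Matrix.mul_nonsing_inv S hdet, Matrix.mul_one]
    rw [this]
    abel
  rw [hform]
  exact Matrix.posSemidef_conjTranspose_mul_self _

lemma exists_isometry_ker {ι : Type*} [Fintype ι] [DecidableEq ι]
    (Vb : Matrix ι (Fin d) ℂ) (hn : 2 * d ≤ Fintype.card ι) :
    ∃ Q : Matrix ι (Fin d) ℂ, Qᴴ * Q = 1 ∧ Qᴴ * Vb = 0 := by
  classical
  set F := EuclideanSpace ℂ ι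
  set L : F →ₗ[ℂ] (Fin d → ℂ) :=
    (Matrix.mulVecLin Vbᴴ).comp (WithLp.linearEquiv 2 ℂ (ι → ℂ)).toLinearMap with hL
  set K := LinearMap.ker L with hK
  have hrank : Module.finrank ℂ (LinearMap.range L) ≤ d := by
    have := Submodule.finrank_le (LinearMap.range L)
    simpa using this
  have hkerrank : d ≤ Module.finrank ℂ K := by
    have hrn := LinearMap.finrank_range_add_finrank_ker L
    have hF : Module.finrank ℂ F = Fintype.card ι := by
      simp [F, finrank_euclideanSpace]
    rw [hF, ← hK] at hrn
    omega
  set b := stdOrthonormalBasis ℂ K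
  set q : Fin d → F := fun j => ((b (Fin.castLE hkerrank j)) : F) with hq
  have hqon : Orthonormal ℂ q := by
    rw [orthonormal_iff_ite]
    intro i j
    have := orthonormal_iff_ite.mp b.orthonormal (Fin.castLE hkerrank i) (Fin.castLE hkerrank j)
    rw [Submodule.coe_inner] at this
    simp only [hq]
    rw [this]
    simp [Fin.ext_iff]
  have hqker : ∀ j, Vbᴴ *ᵥ ((WithLp.equiv 2 (ι → ℂ)) (q j)) = 0 := by
    intro j
    have : L (q j) = 0 := (b (Fin.castLE hkerrank j)).2
    exact this
  refine ⟨Matrix.of (fun x j => q j x), ?_, ?_⟩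
  · ext j j'
    have := orthonormal_iff_ite.mp hqon j j'
    rw [PiLp.inner_apply] at this
    simp only [Matrix.mul_apply, Matrix.conjTranspose_apply, Matrix.of_apply]
    rw [Matrix.one_apply]
    simpa [RCLike.inner_apply, Matrix.star_apply, mul_comm] using this
  · ext j l
    have h0 := congrFun (hqker j) l
    simp only [Matrix.mulVec, dotProduct, Matrix.conjTranspose_apply, Pi.zero_apply] at h0
    have h0s := congrArg star h0
    rw [star_zero, star_sum] at h0s
    simp only [star_mul', star_star] at h0s
    simp only [Matrix.mul_apply, Matrix.conjTranspose_apply, Matrix.of_apply, Matrix.zero_apply]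
    rw [← h0s]
    exact Finset.sum_congr rfl fun x _ => mul_comm _ _
end

end

end Helpers

set_option maxHeartbeats 1000000 in
/-- Let `V` be a reconstruction system on `ℂ^d` with `n = ∑ kᵢ ≥ 2d`,
and let `λ₁ ≥ ⋯ ≥ λ_d` be the eigenvalues of `S_V`. A strictly positive decreasing
vector `μ` is the spectrum of `S_W` for some dual system `W` of `V` iff
`μ_j ≥ λ_{d-j+1}(S_V)⁻¹` for all `j`. -/
theorem spectral_picture_of_duals_large_n
    (d m : ℕ) (k : Fin m → ℕ)
    (V : ∀ i : Fin m, Matrix (Fin (k i)) (Fin d) ℂ)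
    (S : Matrix (Fin d) (Fin d) ℂ) (hS : S = ∑ i, (V i)ᴴ * V i)
    (hSpd : S.PosDef)
    (hn : 2 * d ≤ ∑ i, k i)
    (lam : Fin d → ℝ) (hlamdec : Antitone lam) (hlam : HasSpectrum S lam)
    (μ : Fin d → ℝ) (hμpos : ∀ i, 0 < μ i) (hμdec : Antitone μ) :
    (∃ W : ∀ i : Fin m, Matrix (Fin (k i)) (Fin d) ℂ,
        (∑ i, (W i)ᴴ * V i = 1) ∧ HasSpectrum (∑ i, (W i)ᴴ * W i) μ)
    ↔ ∀ j : Fin d, (lam j.rev)⁻¹ ≤ μ j := by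
  classical
  obtain ⟨hSH, eS, heS⟩ := hlam
  set Vb : Matrix (Σ i : Fin m, Fin (k i)) (Fin d) ℂ :=
    Matrix.of (fun p j => V p.1 p.2 j) with hVb
  have hSb : S = Vbᴴ * Vb := by
    rw [hS]; exact sum_block_conjTranspose_mul V V
  have hdet : IsUnit S.det := hSpd.det_pos.ne'.isUnit
  have hlampos : ∀ j, 0 < lam j := by
    intro j
    have h1 := hSpd.eigenvalues_pos (eS.symm j)
    have h2 : hSpd.1.eigenvalues (eS.symm j) = lam (eS (eS.symm j)) := heS (eS.symm j)
    rw [h2, eS.apply_symm_apply] at h1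
    exact h1
  set β : Fin d → ℝ := fun j => (lam j.rev)⁻¹ with hβdef
  have hβanti : Antitone β := by
    intro a b hab
    have h1 : lam a.rev ≤ lam b.rev := hlamdec (Fin.rev_le_rev.mpr hab)
    exact inv_anti₀ (hlampos a.rev) h1
  have hSinv := inv_spectral hSpd
  have hUmem := hSpd.1.eigenvectorUnitary.2
  constructor
  · -- forward
    rintro ⟨W, hWdual, hWspec⟩
    intro j
    set Z : Matrix (Σ i : Fin m, Fin (k i)) (Fin d) ℂ :=
      Matrix.of (fun p j => W p.1 p.2 j) with hZ
    have hZdual : Zᴴ * Vb = 1 := (sum_block_conjTranspose_mul W V).symm.trans hWdual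
    have hZZ : (∑ i, (W i)ᴴ * W i) = Zᴴ * Z := sum_block_conjTranspose_mul W W
    rw [hZZ] at hWspec
    obtain ⟨hA', eA, heA⟩ := hWspec
    have hpsd := psd_sub_of_dual hSb hSpd hZdual
    have hspecInv : HasSpectrum S⁻¹ (fun i => (hSpd.1.eigenvalues i)⁻¹) :=
      hasSpectrum_of_unitary_diag _ _ hUmem _ hSinv
    obtain ⟨hB', eB, heB⟩ := hspecInv
    have heB2 : ∀ i, hB'.eigenvalues i = β (((eB.trans eS).trans Fin.revPerm) i) := by
      intro i
      rw [heB i]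
      have h2 : hSpd.1.eigenvalues (eB i) = lam (eS (eB i)) := heS (eB i)
      simp only [hβdef, Equiv.trans_apply, Fin.revPerm_apply, Fin.rev_rev]
      rw [h2]
    exact weyl_monotone hpsd hμdec hβanti hA' eA heA hB' _ heB2 j
  · -- backward
    intro h
    set U := (hSpd.1.eigenvectorUnitary : Matrix (Fin d) (Fin d) ℂ) with hUdef
    have hUU : Uᴴ * U = 1 := by
      rw [← Matrix.star_eq_conjTranspose]
      exact Matrix.mem_unitaryGroup_iff'.mp hUmem
    set g : Fin d → ℝ := fun i => μ ((eS i).rev) with hgdef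
    have hge : ∀ i, (hSpd.1.eigenvalues i)⁻¹ ≤ g i := by
      intro i
      have h1 := h ((eS i).rev)
      rw [Fin.rev_rev] at h1
      have h2 : hSpd.1.eigenvalues i = lam (eS i) := heS i
      rw [h2]
      exact h1
    set c : Fin d → ℝ := fun i => Real.sqrt (g i - (hSpd.1.eigenvalues i)⁻¹) with hcdef
    have hcc : ∀ i, c i * c i = g i - (hSpd.1.eigenvalues i)⁻¹ := fun i =>
      Real.mul_self_sqrt (sub_nonneg.mpr (hge i))
    set C : Matrix (Fin d) (Fin d) ℂ :=
      Matrix.diagonal (fun i => ((c i : ℝ) : ℂ)) * Uᴴ with hCdef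
    obtain ⟨Q, hQQ, hQV⟩ := exists_isometry_ker Vb (by
      rw [Fintype.card_sigma]; simpa using hn)
    set Z := Vb * S⁻¹ + Q * C with hZdef
    have hSinvH : S⁻¹ᴴ = S⁻¹ := hSpd.1.inv
    have hVQ : Vbᴴ * Q = 0 := by
      have := congrArg Matrix.conjTranspose hQV
      simpa using this
    have hZH : Zᴴ = S⁻¹ * Vbᴴ + Cᴴ * Qᴴ := by
      rw [hZdef, Matrix.conjTranspose_add, Matrix.conjTranspose_mul, Matrix.conjTranspose_mul,
        hSinvH]
    have hZdual : Zᴴ * Vb = 1 := by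
      rw [hZH, Matrix.add_mul, Matrix.mul_assoc, ← hSb, Matrix.mul_assoc, hQV,
        Matrix.mul_zero, add_zero]
      exact Matrix.nonsing_inv_mul S hdet
    have hCC : Cᴴ * C = U * Matrix.diagonal (fun i => (((c i * c i : ℝ)) : ℂ)) * Uᴴ := by
      rw [hCdef, Matrix.conjTranspose_mul, Matrix.conjTranspose_conjTranspose,
        Matrix.diagonal_conjTranspose]
      have hstar : (star fun i => ((c i : ℝ) : ℂ)) = fun i => ((c i : ℝ) : ℂ) := by
        funext i; simp [Pi.star_def]
      rw [hstar]
      rw [Matrix.mul_assoc, ← Matrix.mul_assoc (Matrix.diagonal _), Matrix.diagonal_mul_diagonal]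
      rw [← Matrix.mul_assoc]
      congr 1
      congr 1
      funext i
      push_cast
      ring
    have hZZ : Zᴴ * Z = U * Matrix.diagonal (fun i => ((g i : ℝ) : ℂ)) * Uᴴ := by
      rw [hZH, hZdef, Matrix.add_mul, Matrix.mul_add, Matrix.mul_add]
      have t1 : S⁻¹ * Vbᴴ * (Vb * S⁻¹) = S⁻¹ := by
        rw [Matrix.mul_assoc S⁻¹ Vbᴴ _, ← Matrix.mul_assoc Vbᴴ Vb S⁻¹, ← hSb,
          Matrix.mul_nonsing_inv S hdet, Matrix.mul_one]
      have t2 : S⁻¹ * Vbᴴ * (Q * C) = 0 := by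
        rw [Matrix.mul_assoc S⁻¹ Vbᴴ _, ← Matrix.mul_assoc Vbᴴ Q C, hVQ, Matrix.zero_mul,
          Matrix.mul_zero]
      have t3 : Cᴴ * Qᴴ * (Vb * S⁻¹) = 0 := by
        rw [Matrix.mul_assoc Cᴴ Qᴴ _, ← Matrix.mul_assoc Qᴴ Vb S⁻¹, hQV, Matrix.zero_mul,
          Matrix.mul_zero]
      have t4 : Cᴴ * Qᴴ * (Q * C) = Cᴴ * C := by
        rw [Matrix.mul_assoc Cᴴ Qᴴ _, ← Matrix.mul_assoc Qᴴ Q C, hQQ, Matrix.one_mul]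
      rw [t1, t2, t3, t4, add_zero, zero_add, hCC, hSinv]
      rw [Matrix.mul_assoc, Matrix.mul_assoc, ← Matrix.mul_add U, ← Matrix.add_mul,
        Matrix.diagonal_add, ← Matrix.mul_assoc]
      have hfun : (fun i => (((hSpd.1.eigenvalues i)⁻¹ : ℝ) : ℂ) + ((c i * c i : ℝ) : ℂ))
          = fun i => ((g i : ℝ) : ℂ) := by
        funext i
        rw [← Complex.ofReal_add, hcc i]
        norm_num
      rw [hfun]
    have hbig : (Matrix.of (fun (p : Σ i : Fin m, Fin (k i)) (j : Fin d) =>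
        Z ⟨p.1, p.2⟩ j)) = Z := by
      ext ⟨i, a⟩ j
      rfl
    refine ⟨fun i => Matrix.of (fun a j => Z ⟨i, a⟩ j), ?_, ?_⟩
    · rw [sum_block_conjTranspose_mul]
      have : (Matrix.of fun (p : Σ i : Fin m, Fin (k i)) (j : Fin d) =>
          (fun i => Matrix.of (fun a j => Z ⟨i, a⟩ j)) p.1 p.2 j) = Z := hbig
      rw [this]
      exact hZdual
    · rw [sum_block_conjTranspose_mul]
      have : (Matrix.of fun (p : Σ i : Fin m, Fin (k i)) (j : Fin d) =>
          (fun i => Matrix.of (fun a j => Z ⟨i, a⟩ j)) p.1 p.2 j) = Z := hbig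
      rw [this]
      obtain ⟨hA', σ, hσ⟩ := hasSpectrum_of_unitary_diag (Zᴴ * Z) U hUmem g hZZ
      exact ⟨hA', σ.trans (eS.trans Fin.revPerm), fun i => hσ i⟩
end

section
/- Fix weights v and let τ = Σ v_i² k_i. For every pair (V, W) with V a projective RS with weights v and W a dual system of V, the joint potential satisfies FP(V,W) := tr(S_V²) + tr(S_W²) ≥ (τ⁴ + d⁴)/(d τ²), and equality holds if and only if S_V = (τ/d) I_d and W = (d/τ)·V = V^#. -/
open Matrix
open scoped ComplexOrder

lemma re_trace_CTM {m n : Type*} [Fintype m] [Fintype n] (B : Matrix m n ℂ) :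
    (Matrix.trace (Bᴴ * B)).re = ∑ j, ∑ i, Complex.normSq (B i j) := by
  simp [Matrix.trace, Matrix.diag, Matrix.mul_apply, Complex.re_sum, Complex.normSq_apply]

lemma re_trace_CTM_nonneg {m n : Type*} [Fintype m] [Fintype n] (B : Matrix m n ℂ) :
    0 ≤ (Matrix.trace (Bᴴ * B)).re := by
  rw [re_trace_CTM]
  exact Finset.sum_nonneg fun j _ => Finset.sum_nonneg fun i _ => Complex.normSq_nonneg _

lemma eq_zero_of_re_trace_CTM {m n : Type*} [Fintype m] [Fintype n] (B : Matrix m n ℂ)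
    (h : (Matrix.trace (Bᴴ * B)).re = 0) : B = 0 := by
  rw [re_trace_CTM] at h
  ext i j
  have h1 : ∀ x ∈ (Finset.univ : Finset n), (0:ℝ) ≤ ∑ i, Complex.normSq (B i x) := by
    intro x _; exact Finset.sum_nonneg fun i _ => Complex.normSq_nonneg _
  have h2 := (Finset.sum_eq_zero_iff_of_nonneg h1).mp h j (Finset.mem_univ j)
  have h3 : ∀ x ∈ (Finset.univ : Finset m), (0:ℝ) ≤ Complex.normSq (B x j) := by
    intro x _; exact Complex.normSq_nonneg _
  have h4 := (Finset.sum_eq_zero_iff_of_nonneg h3).mp h2 i (Finset.mem_univ i)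
  simpa using Complex.normSq_eq_zero.mp h4

-- helper 2: trace of product of PSD is re-nonneg
lemma re_trace_mul_PSD_nonneg {n : Type*} [Fintype n] [DecidableEq n]
    {A B : Matrix n n ℂ} (hA : A.PosSemidef) (hB : B.PosSemidef) :
    0 ≤ (Matrix.trace (A * B)).re := by
  obtain ⟨E, rfl⟩ : ∃ E : Matrix n n ℂ, A = Eᴴ * E := by
    open scoped MatrixOrder Matrix.Norms.L2Operator in
    exact CStarAlgebra.nonneg_iff_eq_star_mul_self.mp hA.nonneg
  obtain ⟨F, rfl⟩ : ∃ F : Matrix n n ℂ, B = Fᴴ * F := by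
    open scoped MatrixOrder Matrix.Norms.L2Operator in
    exact CStarAlgebra.nonneg_iff_eq_star_mul_self.mp hB.nonneg
  have : Matrix.trace (Eᴴ * E * (Fᴴ * F)) = Matrix.trace ((F * Eᴴ)ᴴ * (F * Eᴴ)) := by
    rw [Matrix.conjTranspose_mul, Matrix.conjTranspose_conjTranspose]
    rw [show Eᴴ * E * (Fᴴ * F) = Eᴴ * (E * (Fᴴ * F)) by noncomm_ring,
      Matrix.trace_mul_comm]
    noncomm_ring
  rw [this]
  exact re_trace_CTM_nonneg _

-- helper 3: conjugation algebra
lemma conj_mul_conj {n : Type*} [Fintype n] [DecidableEq n] (U X Y : Matrix n n ℂ)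
    (hU : star U * U = 1) : (U * X * star U) * (U * Y * star U) = U * (X * Y) * star U := by
  calc (U * X * star U) * (U * Y * star U) = U * X * (star U * U) * (Y * star U) := by noncomm_ring
  _ = U * (X * Y) * star U := by rw [hU]; noncomm_ring

lemma trace_conj {n : Type*} [Fintype n] [DecidableEq n] (U X : Matrix n n ℂ)
    (hU : star U * U = 1) : Matrix.trace (U * X * star U) = Matrix.trace X := by
  rw [Matrix.mul_assoc, Matrix.trace_mul_comm, Matrix.mul_assoc, hU, Matrix.mul_one]

-- helper 4: scalar tangent line
lemma tangent_ineq {x t : ℝ} (hx : 0 < x) (ht : 0 < t) :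
    x^2 + (x⁻¹)^2 - (t^2 + (t⁻¹)^2) - (2*t - 2/t^3)*(x - t)
      = (x-t)^2 * (1 + (2*x+t)/(x^2*t^3)) := by
  field_simp
  ring

/-- For every pair `(V, W)` with `V` a projective reconstruction
system with weights `v` (so `tr S_V = τ = ∑ vᵢ² kᵢ`) and `W` a dual system of `V`, the
joint potential `FP(V,W) = tr(S_V²) + tr(S_W²)` is at least `(τ⁴ + d⁴)/(d τ²)`, with
equality iff `V` is tight (`S_V = (τ/d) I`) and `W = (d/τ)·V = V^#`. -/
theorem joint_potential_lower_bound
    (d m : ℕ) (hd : 0 < d) (k : Fin m → ℕ)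
    (v : Fin m → ℝ) (hv : ∀ i, 0 < v i)
    (τ : ℝ) (hτ : τ = ∑ i, v i ^ 2 * k i)
    (V W : ∀ i : Fin m, Matrix (Fin (k i)) (Fin d) ℂ)
    (hproj : ∀ i, V i * (V i)ᴴ = ((v i ^ 2 : ℝ) : ℂ) • 1)
    (S : Matrix (Fin d) (Fin d) ℂ) (hS : S = ∑ i, (V i)ᴴ * V i)
    (hSpd : S.PosDef)
    (hdual : ∑ i, (W i)ᴴ * V i = 1)
    (SW : Matrix (Fin d) (Fin d) ℂ) (hSW : SW = ∑ i, (W i)ᴴ * W i) :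
    (τ ^ 4 + (d : ℝ) ^ 4) / (d * τ ^ 2)
      ≤ (Matrix.trace (S * S)).re + (Matrix.trace (SW * SW)).re
    ∧ ((Matrix.trace (S * S)).re + (Matrix.trace (SW * SW)).re
          = (τ ^ 4 + (d : ℝ) ^ 4) / (d * τ ^ 2)
        ↔ S = ((τ / d : ℝ) : ℂ) • 1 ∧ ∀ i, W i = ((d / τ : ℝ) : ℂ) • V i) := by
  classical
  have hH : S.IsHermitian := hSpd.1
  -- trace of S equals τ
  have htrS : Matrix.trace S = (τ : ℂ) := by
    rw [hS, Matrix.trace_sum]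
    have : ∀ i, Matrix.trace ((V i)ᴴ * V i) = ((v i ^ 2 * k i : ℝ) : ℂ) := by
      intro i
      rw [Matrix.trace_mul_comm, hproj i, Matrix.trace_smul, Matrix.trace_one]
      push_cast
      simp [smul_eq_mul]
    simp only [this, hτ]
    push_cast; ring
  -- spectral data
  set U : Matrix (Fin d) (Fin d) ℂ := (hH.eigenvectorUnitary : Matrix (Fin d) (Fin d) ℂ) with hUdef
  have hU2 : star U * U = 1 := Matrix.mem_unitaryGroup_iff'.mp (hH.eigenvectorUnitary).2
  have hU1 : U * star U = 1 := Matrix.mem_unitaryGroup_iff.mp (hH.eigenvectorUnitary).2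
  set L : Fin d → ℝ := hH.eigenvalues with hLdef
  have hLpos : ∀ i, 0 < L i := hSpd.eigenvalues_pos
  set D : Matrix (Fin d) (Fin d) ℂ := Matrix.diagonal (fun i => ((L i : ℝ) : ℂ)) with hDdef
  have hspec : S = U * D * star U := by
    have := hH.spectral_theorem
    convert this using 2
    simp only [Unitary.conjStarAlgAut_apply]; rfl
  have hsumL : ∑ i, L i = τ := by
    have h1 : Matrix.trace S = ∑ i, ((L i : ℝ) : ℂ) := by
      rw [hspec, trace_conj U D hU2, hDdef, Matrix.trace_diagonal]
    rw [htrS] at h1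
    have := h1.symm
    push_cast at this
    exact_mod_cast this
  have hτpos : 0 < τ := by
    rw [← hsumL]
    have : Nonempty (Fin d) := Fin.pos_iff_nonempty.mp hd
    exact Finset.sum_pos (fun i _ => hLpos i) Finset.univ_nonempty
  -- the inverse T
  set Dinv : Matrix (Fin d) (Fin d) ℂ :=
    Matrix.diagonal (fun i => (((L i)⁻¹ : ℝ) : ℂ)) with hDinvdef
  set T : Matrix (Fin d) (Fin d) ℂ := U * Dinv * star U with hTdef
  have hDD : D * Dinv = 1 := by
    rw [hDdef, hDinvdef, Matrix.diagonal_mul_diagonal]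
    have heq : (fun i => ((L i : ℝ):ℂ) * (((L i)⁻¹ : ℝ):ℂ)) = fun _ => (1:ℂ) := by
      funext i; rw [← Complex.ofReal_mul, mul_inv_cancel₀ (hLpos i).ne']; simp
    rw [heq, Matrix.diagonal_one]
  have hDD' : Dinv * D = 1 := by
    rw [hDdef, hDinvdef, Matrix.diagonal_mul_diagonal]
    have heq : (fun i => (((L i)⁻¹ : ℝ):ℂ) * ((L i : ℝ):ℂ)) = fun _ => (1:ℂ) := by
      funext i; rw [← Complex.ofReal_mul, inv_mul_cancel₀ (hLpos i).ne']; simp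
    rw [heq, Matrix.diagonal_one]
  have hST : S * T = 1 := by
    rw [hspec, hTdef, conj_mul_conj U D Dinv hU2, hDD, Matrix.mul_one, hU1]
  have hTS : T * S = 1 := by
    rw [hspec, hTdef, conj_mul_conj U Dinv D hU2, hDD', Matrix.mul_one, hU1]
  have hDinvH : Dinvᴴ = Dinv := by
    rw [hDinvdef]
    exact Matrix.isHermitian_diagonal_iff.mpr fun i => Complex.conj_ofReal _
  have hTH : Tᴴ = T := by
    rw [hTdef, Matrix.star_eq_conjTranspose]
    rw [Matrix.conjTranspose_mul, Matrix.conjTranspose_mul, Matrix.conjTranspose_conjTranspose,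
      hDinvH]
    rw [Matrix.mul_assoc]
  have hTpsd : T.PosSemidef := by
    have hDinvPsd : Dinv.PosSemidef := by
      rw [hDinvdef]
      refine Matrix.posSemidef_diagonal_iff.mpr fun i => ?_
      exact Complex.zero_le_real.mpr (inv_nonneg.mpr (hLpos i).le)
    have := hDinvPsd.mul_mul_conjTranspose_same U
    rwa [← Matrix.star_eq_conjTranspose, ← hTdef] at this
  -- traces
  have htrS2 : (Matrix.trace (S * S)).re = ∑ i, (L i)^2 := by
    rw [hspec, conj_mul_conj U D D hU2, trace_conj _ _ hU2, hDdef, Matrix.diagonal_mul_diagonal,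
      Matrix.trace_diagonal]
    rw [Complex.re_sum]
    congr 1; funext i
    rw [← Complex.ofReal_mul]
    simp [sq]
  have htrT2 : (Matrix.trace (T * T)).re = ∑ i, ((L i)⁻¹)^2 := by
    rw [hTdef, conj_mul_conj U Dinv Dinv hU2, trace_conj _ _ hU2, hDinvdef,
      Matrix.diagonal_mul_diagonal, Matrix.trace_diagonal]
    rw [Complex.re_sum]
    congr 1; funext i
    rw [← Complex.ofReal_mul]
    simp [sq]
  -- the defect system
  have hdual' : ∑ i, (V i)ᴴ * W i = 1 := by
    have := congrArg Matrix.conjTranspose hdual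
    simpa [Matrix.conjTranspose_sum, Matrix.conjTranspose_mul] using this
  set P : Matrix (Fin d) (Fin d) ℂ := ∑ i, (W i - V i * T)ᴴ * (W i - V i * T) with hPdef
  have hPpsd : P.PosSemidef := by
    rw [hPdef]
    refine Finset.sum_induction _ _ (fun a b ha hb => ha.add hb) Matrix.PosSemidef.zero
      (fun i _ => Matrix.posSemidef_conjTranspose_mul_self _)
  have hPH : Pᴴ = P := by
    rw [hPdef, Matrix.conjTranspose_sum]
    congr 1; funext i
    rw [Matrix.conjTranspose_mul, Matrix.conjTranspose_conjTranspose]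
  -- key identity : P = SW - T
  have hPeq : P = SW - T := by
    rw [hPdef]
    have e1 : ∀ i, (W i - V i * T)ᴴ * (W i - V i * T)
        = (W i)ᴴ * W i - ((W i)ᴴ * V i) * T - Tᴴ * ((V i)ᴴ * W i)
          + Tᴴ * (((V i)ᴴ * V i) * T) := by
      intro i
      rw [Matrix.conjTranspose_sub, Matrix.conjTranspose_mul]
      rw [Matrix.sub_mul, Matrix.mul_sub, Matrix.mul_sub]
      simp only [Matrix.mul_assoc]
      abel
    rw [Finset.sum_congr rfl (fun i _ => e1 i)]
    have e2 : ∑ i, ((W i)ᴴ * W i - ((W i)ᴴ * V i) * T - Tᴴ * ((V i)ᴴ * W i)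
          + Tᴴ * (((V i)ᴴ * V i) * T))
        = (∑ i, (W i)ᴴ * W i) - (∑ i, (W i)ᴴ * V i) * T
          - Tᴴ * (∑ i, (V i)ᴴ * W i) + Tᴴ * ((∑ i, (V i)ᴴ * V i) * T) := by
      simp [Finset.sum_sub_distrib, Finset.sum_add_distrib, Finset.sum_mul, Finset.mul_sum]
    rw [e2, hdual, hdual', ← hS, ← hSW, hTH, hST, Matrix.one_mul, Matrix.mul_one]
    abel
  have hSWeq : SW = T + P := by rw [hPeq]; abel
  have htrdecomp : (Matrix.trace (SW * SW)).re
      = (Matrix.trace (T * T)).re + 2 * (Matrix.trace (T * P)).re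
        + (Matrix.trace (Pᴴ * P)).re := by
    have e3 : SW * SW = T * T + T * P + P * T + P * P := by rw [hSWeq]; noncomm_ring
    rw [e3, hPH]
    simp only [Matrix.trace_add, Complex.add_re]
    rw [Matrix.trace_mul_comm P T]
    ring
  set x : ℝ := (Matrix.trace (T * P)).re with hxdef
  have hx : 0 ≤ x := re_trace_mul_PSD_nonneg hTpsd hPpsd
  set y : ℝ := (Matrix.trace (Pᴴ * P)).re with hydef
  have hy : 0 ≤ y := re_trace_CTM_nonneg P
  -- scalar tangent-line bound
  set t : ℝ := τ / d with htdef
  have hdpos : (0:ℝ) < d := Nat.cast_pos.mpr hd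
  have htpos : 0 < t := div_pos hτpos hdpos
  set slack : Fin d → ℝ := fun i => (L i - t)^2 * (1 + (2*(L i)+t)/((L i)^2*t^3)) with hslackdef
  have hslack_nonneg : ∀ i, 0 ≤ slack i := by
    intro i
    have h1 := hLpos i
    rw [hslackdef]
    positivity
  have hslack_eq : ∀ i, slack i = 0 → L i = t := by
    intro i h
    have h1 := hLpos i
    have hpos : 0 < 1 + (2*(L i)+t)/((L i)^2*t^3) := by positivity
    rw [hslackdef] at h
    rcases mul_eq_zero.mp h with h1 | h2
    · have := sq_eq_zero_iff.mp h1; linarith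
    · linarith
  have hB : (∑ i, (L i)^2) + (∑ i, ((L i)⁻¹)^2)
      = (d:ℝ)*(t^2+(t⁻¹)^2) + ∑ i, slack i := by
    have e : ∀ i, (L i)^2 + ((L i)⁻¹)^2
        = (t^2 + (t⁻¹)^2) + (2*t - 2/t^3)*(L i - t) + slack i := by
      intro i
      have h0 := tangent_ineq (hLpos i) htpos
      rw [hslackdef]
      dsimp only
      linarith
    have s0 : (∑ i, (L i)^2) + (∑ i, ((L i)⁻¹)^2) = ∑ i, ((L i)^2 + ((L i)⁻¹)^2) :=
      (Finset.sum_add_distrib).symm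
    rw [s0, Finset.sum_congr rfl (fun i _ => e i), Finset.sum_add_distrib,
      Finset.sum_add_distrib, Finset.sum_const, Finset.card_univ, Fintype.card_fin,
      ← Finset.mul_sum, Finset.sum_sub_distrib, Finset.sum_const, Finset.card_univ,
      Fintype.card_fin, hsumL]
    simp only [nsmul_eq_mul]
    have hτdt : τ - (d:ℝ) * t = 0 := by
      rw [htdef]
      field_simp
      ring
    rw [hτdt, mul_zero, add_zero]
  have hbound : (τ^4 + (d:ℝ)^4)/((d:ℝ)*τ^2) = (d:ℝ)*(t^2+(t⁻¹)^2) := by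
    rw [htdef]
    field_simp
  have htotal : (Matrix.trace (S*S)).re + (Matrix.trace (SW*SW)).re
      = (d:ℝ)*(t^2+(t⁻¹)^2) + (∑ i, slack i) + 2*x + y := by
    rw [htrS2, htrdecomp, htrT2]
    linarith [hB]
  have hEnn : 0 ≤ ∑ i, slack i := Finset.sum_nonneg (fun i _ => hslack_nonneg i)
  have htne : ((t:ℝ):ℂ) ≠ 0 := by
    simpa using htpos.ne'
  -- forward equality direction
  have forward : (Matrix.trace (S*S)).re + (Matrix.trace (SW*SW)).re
        = (τ^4 + (d:ℝ)^4)/((d:ℝ)*τ^2)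
      → S = ((τ / d : ℝ) : ℂ) • 1 ∧ ∀ i, W i = ((d / τ : ℝ) : ℂ) • V i := by
    intro heq
    rw [hbound] at heq
    rw [htotal] at heq
    have hE0 : ∑ i, slack i = 0 := by linarith
    have hy0 : y = 0 := by linarith
    have hLt : ∀ i, L i = t := fun i =>
      hslack_eq i ((Finset.sum_eq_zero_iff_of_nonneg
        (fun j _ => hslack_nonneg j)).mp hE0 i (Finset.mem_univ i))
    have hDt : D = ((t:ℝ):ℂ) • 1 := by
      have hfun : (fun i => ((L i:ℝ):ℂ)) = fun _ : Fin d => ((t:ℝ):ℂ) := by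
        funext i; rw [hLt i]
      rw [hDdef, hfun, Matrix.smul_one_eq_diagonal]
    have hSt : S = ((t:ℝ):ℂ) • 1 := by
      rw [hspec, hDt, Matrix.mul_smul, Matrix.mul_one, Matrix.smul_mul, hU1]
    have hSgoal : S = ((τ / d : ℝ) : ℂ) • 1 := by rw [hSt]
    refine ⟨hSgoal, ?_⟩
    have hP0 : P = 0 := eq_zero_of_re_trace_CTM P hy0
    have hDzero : ∀ j, W j - V j * T = 0 := by
      have htrP : ∑ j, (Matrix.trace ((W j - V j * T)ᴴ * (W j - V j * T))).re = 0 := by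
        have h1 : Matrix.trace P = 0 := by rw [hP0]; simp
        rw [hPdef, Matrix.trace_sum] at h1
        rw [← Complex.re_sum]
        rw [h1]
        simp
      intro j
      exact eq_zero_of_re_trace_CTM _
        ((Finset.sum_eq_zero_iff_of_nonneg
          (fun j _ => re_trace_CTM_nonneg _)).mp htrP j (Finset.mem_univ j))
    have hTt : T = ((d / τ : ℝ):ℂ) • 1 := by
      have h1 : ((t:ℝ):ℂ) • T = 1 := by
        rw [← hTS, hSt, Matrix.mul_smul, Matrix.mul_one]
      have h2 : T = ((t:ℝ):ℂ)⁻¹ • 1 := by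
        calc T = ((t:ℝ):ℂ)⁻¹ • (((t:ℝ):ℂ) • T) := by
              rw [smul_smul, inv_mul_cancel₀ htne, one_smul]
        _ = ((t:ℝ):ℂ)⁻¹ • 1 := by rw [h1]
      rw [h2]
      congr 1
      rw [← Complex.ofReal_inv, htdef]
      congr 1
      rw [inv_div]
    intro i
    have hWi : W i = V i * T := by
      have := hDzero i
      rwa [sub_eq_zero] at this
    rw [hWi, hTt, Matrix.mul_smul, Matrix.mul_one]
  -- backward equality direction
  have backward : S = ((τ / d : ℝ) : ℂ) • 1 → (∀ i, W i = ((d / τ : ℝ) : ℂ) • V i)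
      → (Matrix.trace (S*S)).re + (Matrix.trace (SW*SW)).re
        = (τ^4 + (d:ℝ)^4)/((d:ℝ)*τ^2) := by
    intro hSt hWt
    have h1 : (Matrix.trace (S*S)).re = (τ/d)^2 * d := by
      rw [hSt, Matrix.smul_mul, Matrix.mul_smul, Matrix.one_mul, smul_smul,
        Matrix.trace_smul, Matrix.trace_one]
      push_cast
      simp [sq]
    have hSWt : SW = ((d / τ : ℝ):ℂ) • 1 := by
      rw [hSW]
      have e : ∀ i, (W i)ᴴ * W i
          = (((d/τ:ℝ):ℂ) * ((d/τ:ℝ):ℂ)) • ((V i)ᴴ * V i) := by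
        intro i
        rw [hWt i, Matrix.conjTranspose_smul, Matrix.smul_mul, Matrix.mul_smul, smul_smul]
        congr 1
        rw [Complex.star_def, Complex.conj_ofReal]
      rw [Finset.sum_congr rfl (fun i _ => e i), ← Finset.smul_sum, ← hS, hSt, smul_smul]
      congr 1
      push_cast
      field_simp
    have h2 : (Matrix.trace (SW*SW)).re = ((d:ℝ)/τ)^2 * d := by
      rw [hSWt, Matrix.smul_mul, Matrix.mul_smul, Matrix.one_mul, smul_smul,
        Matrix.trace_smul, Matrix.trace_one]
      push_cast
      simp [sq]
    rw [h1, h2]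
    field_simp
  constructor
  · rw [hbound, htotal]
    linarith
  · exact ⟨forward, fun h => backward h.1 h.2⟩
end

section
/- Let α, γ ∈ ℝ^n, β ∈ ℝ^m, and b ∈ ℝ with b ≤ min_k γ_k. If Σ(γ, b·1_m) ≤ Σ(α, β) and γ is weakly submajorized by α (γ ≺_w α), then the concatenated vector (γ, b·1_m) ∈ ℝ^{n+m} is weakly submajorized by (α, β): (γ, b·1_m) ≺_w (α, β). -/
open Finset

/-- The decreasing rearrangement of a finite real vector. -/
noncomputable def decRearrange {N : ℕ} (x : Fin N → ℝ) : Fin N → ℝ :=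
  fun i => x (Tuple.sort x i.rev)

/-- Weak (sub)majorization `x ≺_w y`: every partial sum of the decreasing rearrangement
of `x` is dominated by the corresponding one of `y`. -/
def SubMajorizes {N : ℕ} (x y : Fin N → ℝ) : Prop :=
  ∀ K : ℕ, ∑ i ∈ univ.filter (fun i : Fin N => (i : ℕ) < K), decRearrange x i
      ≤ ∑ i ∈ univ.filter (fun i : Fin N => (i : ℕ) < K), decRearrange y i

noncomputable def sortPerm {N : ℕ} (x : Fin N → ℝ) : Equiv.Perm (Fin N) :=
  Fin.revPerm.trans (Tuple.sort x)

lemma decRearrange_eq {N : ℕ} (x : Fin N → ℝ) : decRearrange x = x ∘ (sortPerm x) := rfl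

lemma antitone_decRearrange {N : ℕ} (x : Fin N → ℝ) : Antitone (decRearrange x) := by
  have h1 : Monotone (x ∘ Tuple.sort x) := Tuple.monotone_sort x
  intro i j hij
  exact h1 (by simpa [Fin.rev_le_rev] using hij)

lemma sum_decRearrange {N : ℕ} (x : Fin N → ℝ) (s : Finset (Fin N)) :
    ∑ i ∈ s, decRearrange x i = ∑ i ∈ s.image (sortPerm x), x i := by
  rw [Finset.sum_image (fun a _ b _ h => (sortPerm x).injective h)]
  rfl

lemma le_apply_strictMono {K N : ℕ} {f : Fin K → Fin N} (hf : StrictMono f) (j : Fin K) :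
    (j : ℕ) ≤ (f j : ℕ) := by
  induction K with
  | zero => exact j.elim0
  | succ K ih =>
    rcases j with ⟨jv, hj⟩
    induction jv with
    | zero => simp
    | succ t iht =>
      have ht : t < K + 1 := by omega
      have h1 := iht ht
      have h2 : f ⟨t, ht⟩ < f ⟨t + 1, hj⟩ := hf (by simp [Fin.lt_def])
      simp only [Fin.lt_def, Fin.val_mk] at h1 h2 ⊢
      omega


noncomputable def topsum {N : ℕ} (x : Fin N → ℝ) (K : ℕ) : ℝ :=
  ∑ i ∈ univ.filter (fun i : Fin N => (i : ℕ) < K), decRearrange x i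

lemma filter_lt_eq_map {N K : ℕ} (hK : K ≤ N) :
    (univ : Finset (Fin N)).filter (fun i : Fin N => (i : ℕ) < K)
      = univ.map (Fin.castLEEmb hK) := by
  ext i
  simp only [mem_filter, mem_univ, true_and, mem_map, Fin.castLEEmb_apply]
  constructor
  · intro h
    exact ⟨⟨i, h⟩, by simp [Fin.castLE]⟩
  · rintro ⟨j, rfl⟩
    simpa using j.2

lemma card_filter_lt {N K : ℕ} (hK : K ≤ N) :
    ((univ : Finset (Fin N)).filter (fun i : Fin N => (i : ℕ) < K)).card = K := by
  rw [filter_lt_eq_map hK]; simp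

lemma sum_image_orderEmb {N : ℕ} (d : Fin N → ℝ) (s : Finset (Fin N)) :
    ∑ i ∈ s, d i = ∑ j : Fin s.card, d (s.orderEmbOfFin rfl j) := by
  have hs : s = Finset.image (s.orderEmbOfFin rfl) univ := by
    ext a
    simp only [Finset.mem_image, mem_univ, true_and]
    have h2 := Finset.range_orderEmbOfFin s rfl
    constructor
    · intro ha
      have : a ∈ Set.range (s.orderEmbOfFin rfl) := by
        rw [h2]; exact ha
      exact Set.mem_range.1 this
    · rintro ⟨j, rfl⟩; exact Finset.orderEmbOfFin_mem s rfl j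
  conv_lhs => rw [hs]
  rw [Finset.sum_image (fun a _ b _ h => (s.orderEmbOfFin rfl).injective h)]

lemma sum_le_topsum_antitone {N : ℕ} {d : Fin N → ℝ} (hd : Antitone d) (s : Finset (Fin N)) :
    ∑ i ∈ s, d i ≤ ∑ i ∈ univ.filter (fun i : Fin N => (i : ℕ) < s.card), d i := by
  have hK : s.card ≤ N := by simpa using s.card_le_univ
  rw [filter_lt_eq_map hK, Finset.sum_map, sum_image_orderEmb d s]
  refine Finset.sum_le_sum fun j _ => hd ?_
  have := le_apply_strictMono (s.orderEmbOfFin rfl).strictMono j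
  simp only [Fin.le_def, Fin.castLEEmb_apply, Fin.coe_castLE]
  exact this

lemma sum_le_topsum {N : ℕ} (x : Fin N → ℝ) (s : Finset (Fin N)) :
    ∑ i ∈ s, x i ≤ topsum x s.card := by
  have h : ∑ i ∈ s, x i = ∑ i ∈ s.image (sortPerm x).symm, decRearrange x i := by
    rw [sum_decRearrange, Finset.image_image]
    simp [Function.comp_def]
  rw [h, topsum]
  have hc : (s.image (sortPerm x).symm).card = s.card :=
    Finset.card_image_of_injective _ (sortPerm x).symm.injective
  rw [← hc]
  exact sum_le_topsum_antitone (antitone_decRearrange x) _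

lemma topsum_eq_sum {N : ℕ} (x : Fin N → ℝ) (K : ℕ) (hK : K ≤ N) :
    ∃ t : Finset (Fin N), t.card = K ∧ topsum x K = ∑ i ∈ t, x i := by
  refine ⟨(univ.filter (fun i : Fin N => (i : ℕ) < K)).image (sortPerm x), ?_, ?_⟩
  · rw [Finset.card_image_of_injective _ (sortPerm x).injective, card_filter_lt hK]
  · exact sum_decRearrange x _

lemma topsum_full {N : ℕ} (x : Fin N → ℝ) (K : ℕ) (hK : N ≤ K) :
    topsum x K = ∑ i, x i := by
  rw [topsum]
  have h : (univ : Finset (Fin N)).filter (fun i : Fin N => (i : ℕ) < K) = univ :=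
    Finset.filter_true_of_mem (fun i _ => lt_of_lt_of_le i.2 hK)
  rw [h, decRearrange_eq]
  simp only [Function.comp_apply]
  exact Equiv.sum_comp (sortPerm x) x

lemma natAdd_injective (n m : ℕ) : Function.Injective (fun i : Fin m => Fin.natAdd n i) := by
  intro a b h
  have := congrArg Fin.val h
  simp only [Fin.coe_natAdd] at this
  exact Fin.ext (by omega)

lemma parts_disjoint {n m : ℕ} (sL : Finset (Fin n)) (sR : Finset (Fin m)) :
    Disjoint (sL.image (Fin.castAdd m)) (sR.image (Fin.natAdd n)) := by
  rw [Finset.disjoint_left]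
  rintro a ha hb
  simp only [Finset.mem_image] at ha hb
  obtain ⟨i, _, rfl⟩ := ha
  obtain ⟨j, _, hj⟩ := hb
  have := congrArg Fin.val hj
  simp only [Fin.coe_natAdd, Fin.coe_castAdd] at this
  omega

lemma parts_card {n m : ℕ} (sL : Finset (Fin n)) (sR : Finset (Fin m)) :
    (sL.image (Fin.castAdd m) ∪ sR.image (Fin.natAdd n)).card = sL.card + sR.card := by
  rw [Finset.card_union_of_disjoint (parts_disjoint sL sR),
    Finset.card_image_of_injective _ (Fin.castAdd_injective n m),
    Finset.card_image_of_injective _ (natAdd_injective n m)]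

lemma parts_sum {n m : ℕ} (f : Fin n → ℝ) (g : Fin m → ℝ)
    (sL : Finset (Fin n)) (sR : Finset (Fin m)) :
    ∑ i ∈ sL.image (Fin.castAdd m) ∪ sR.image (Fin.natAdd n), Fin.append f g i
      = ∑ i ∈ sL, f i + ∑ i ∈ sR, g i := by
  rw [Finset.sum_union (parts_disjoint sL sR),
    Finset.sum_image (fun a _ b _ h => Fin.castAdd_injective n m h),
    Finset.sum_image (fun a _ b _ h => natAdd_injective n m h)]
  simp [Fin.append_left, Fin.append_right]

lemma append_decomp {n m : ℕ} (t : Finset (Fin (n + m))) :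
    ∃ sL : Finset (Fin n), ∃ sR : Finset (Fin m),
      t = sL.image (Fin.castAdd m) ∪ sR.image (Fin.natAdd n) := by
  refine ⟨t.preimage (Fin.castAdd m) ((Fin.castAdd_injective n m).injOn),
    t.preimage (Fin.natAdd n) ((natAdd_injective n m).injOn), ?_⟩
  ext i
  simp only [Finset.mem_union, Finset.mem_image, Finset.mem_preimage]
  constructor
  · intro hi
    by_cases h : (i : ℕ) < n
    · exact Or.inl ⟨⟨i, h⟩, by simpa [Fin.castAdd, Fin.castLE, Fin.ext_iff] using hi,
        by simp [Fin.castAdd, Fin.castLE, Fin.ext_iff]⟩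
    · refine Or.inr ⟨⟨(i : ℕ) - n, by omega⟩, ?_, ?_⟩
      · have : Fin.natAdd n (⟨(i : ℕ) - n, by omega⟩ : Fin m) = i := by
          simp [Fin.ext_iff]; omega
        rw [this]; exact hi
      · simp [Fin.ext_iff]; omega
  · rintro (⟨j, hj, rfl⟩ | ⟨j, hj, rfl⟩) <;> exact hj

lemma sum_append_total {n m : ℕ} (f : Fin n → ℝ) (g : Fin m → ℝ) :
    ∑ i, Fin.append f g i = ∑ i, f i + ∑ i, g i := by
  rw [Fin.sum_univ_add]
  simp [Fin.append_left, Fin.append_right]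


lemma topsum_zero {N : ℕ} (x : Fin N → ℝ) : topsum x 0 = 0 := by
  simp [topsum]


/-- **majorization lemma.** Let `α, γ ∈ ℝ^n`, `β ∈ ℝ^m`, `b ∈ ℝ` with
`b ≤ min γ`. If `∑(γ, b·𝟙_m) ≤ ∑(α, β)` and `γ ≺_w α`, then
`(γ, b·𝟙_m) ≺_w (α, β)`. -/
theorem append_submajorizes
    (n m : ℕ) (α γ : Fin n → ℝ) (β : Fin m → ℝ) (b : ℝ)
    (hb : ∀ i, b ≤ γ i)
    (hsum : ∑ i, Fin.append γ (fun _ : Fin m => b) i ≤ ∑ i, Fin.append α β i)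
    (hw : SubMajorizes γ α) :
    SubMajorizes (Fin.append γ (fun _ : Fin m => b)) (Fin.append α β) := by
  set x := Fin.append γ (fun _ : Fin m => b) with hx
  set y := Fin.append α β with hy
  have hsum' : ∑ i, γ i + (m : ℝ) * b ≤ ∑ i, α i + ∑ i, β i := by
    rw [hx, hy, sum_append_total, sum_append_total] at hsum
    simpa [Finset.sum_const, nsmul_eq_mul] using hsum
  have hga : ∑ i, γ i ≤ ∑ i, α i := by
    have := hw n
    change topsum γ n ≤ topsum α n at this
    rwa [topsum_full γ n le_rfl, topsum_full α n le_rfl] at this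
  intro K
  change topsum x K ≤ topsum y K
  rcases le_or_gt (n + m) K with hK | hK
  · rw [topsum_full x K hK, topsum_full y K hK]; exact hsum
  have hKN : K ≤ n + m := le_of_lt hK
  obtain ⟨t, htc, htx⟩ := topsum_eq_sum x K hKN
  obtain ⟨sL, sR, rfl⟩ := append_decomp t
  have hcard : sL.card + sR.card = K := by rw [← parts_card]; exact htc
  rw [htx, hx, parts_sum]
  have hsRb : ∑ i ∈ sR, (fun _ : Fin m => b) i = (sR.card : ℝ) * b := by
    simp [Finset.sum_const, nsmul_eq_mul]
  rw [hsRb]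
  have hsLn : sL.card ≤ n := by simpa using sL.card_le_univ
  rcases le_or_gt K n with hKn | hKn
  · -- K ≤ n
    obtain ⟨u, hsub, -, hucard⟩ := Finset.exists_subsuperset_card_eq (n := K) sL.subset_univ
      (by omega) (by simpa using hKn)
    have h1 : ∑ i ∈ sL, γ i + (sR.card : ℝ) * b ≤ ∑ i ∈ u, γ i := by
      rw [← Finset.sum_sdiff hsub]
      have h2 : ((u \ sL).card : ℝ) * b ≤ ∑ i ∈ u \ sL, γ i := by
        have := Finset.card_nsmul_le_sum (u \ sL) γ b (fun i _ => hb i)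
        simpa [nsmul_eq_mul] using this
      have h3 : (u \ sL).card = sR.card := by
        rw [Finset.card_sdiff_of_subset hsub]; omega
      rw [h3] at h2
      linarith
    have h4 : ∑ i ∈ u, γ i ≤ topsum γ K := by
      have := sum_le_topsum γ u
      rwa [hucard] at this
    have h5 : topsum γ K ≤ topsum α K := hw K
    have h6 : topsum α K ≤ topsum y K := by
      obtain ⟨t', ht'c, ht'⟩ := topsum_eq_sum α K hKn
      have h7 := sum_le_topsum y (t'.image (Fin.castAdd m) ∪ (∅ : Finset (Fin m)).image (Fin.natAdd n))
      rw [parts_card, ht'c, Finset.card_empty, Nat.add_zero, hy, parts_sum] at h7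
      simpa [ht'] using h7
    linarith
  · -- n < K
    set j := K - n with hj
    have hjm : j ≤ m := by omega
    have hsRcard : sR.card = j + (n - sL.card) := by omega
    have h1 : ∑ i ∈ sL, γ i + (sR.card : ℝ) * b ≤ ∑ i, γ i + (j : ℝ) * b := by
      rw [← Finset.sum_sdiff sL.subset_univ]
      have h2 : ((univ \ sL).card : ℝ) * b ≤ ∑ i ∈ univ \ sL, γ i := by
        have := Finset.card_nsmul_le_sum (univ \ sL) γ b (fun i _ => hb i)
        simpa [nsmul_eq_mul] using this
      have h3 : (univ \ sL).card = n - sL.card := by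
        rw [Finset.card_sdiff_of_subset sL.subset_univ]; simp
      rw [h3] at h2
      have h4 : ((sR.card : ℝ)) = (j : ℝ) + ((n - sL.card : ℕ) : ℝ) := by
        rw [hsRcard]; push_cast; ring
      rw [h4]
      linarith
    obtain ⟨t', ht'c, ht'⟩ := topsum_eq_sum β j hjm
    set T := topsum β j with hT
    have hstep2 : ∑ i, γ i + (j : ℝ) * b ≤ ∑ i, α i + T := by
      rcases le_or_gt ((j : ℝ) * b) T with hcase | hcase
      · linarith
      · have hj0 : 0 < j := by
          by_contra h
          have : j = 0 := by omega
          rw [this] at hcase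
          simp [hT, this, topsum_zero] at hcase
        set e := decRearrange β with he
        set jm1 : Fin m := ⟨j - 1, by omega⟩ with hjm1
        have h1' : (j : ℝ) * e jm1 ≤ T := by
          have hcnt := Finset.card_nsmul_le_sum
            (univ.filter (fun i : Fin m => (i : ℕ) < j)) e (e jm1)
            (fun i hi => by
              refine antitone_decRearrange β ?_
              simp only [Finset.mem_filter] at hi
              simp only [Fin.le_def, hjm1]
              omega)
          rw [card_filter_lt hjm] at hcnt
          simpa [nsmul_eq_mul, hT, topsum] using hcnt
        have heb : e jm1 < b := by
          have hjpos : (0 : ℝ) < (j : ℝ) := by exact_mod_cast hj0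
          nlinarith
        have hsplit : ∑ i, β i = T + ∑ i ∈ univ.filter (fun i : Fin m => ¬ (i : ℕ) < j), e i := by
          rw [hT, topsum, Finset.sum_filter_add_sum_filter_not]
          rw [decRearrange_eq]
          simp only [Function.comp_apply]
          exact (Equiv.sum_comp (sortPerm β) β).symm
        have hbot : ∑ i ∈ univ.filter (fun i : Fin m => ¬ (i : ℕ) < j), e i
            ≤ ((m - j : ℕ) : ℝ) * b := by
          have hcnt := Finset.sum_le_card_nsmul
            (univ.filter (fun i : Fin m => ¬ (i : ℕ) < j)) e b
            (fun i hi => by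
              simp only [Finset.mem_filter] at hi
              refine le_trans (antitone_decRearrange β (show jm1 ≤ i by
                simp only [Fin.le_def, hjm1]; omega)) (le_of_lt heb))
          have hcardnot : (univ.filter (fun i : Fin m => ¬ (i : ℕ) < j)).card = m - j := by
            rw [Finset.filter_not, Finset.card_sdiff_of_subset (Finset.filter_subset _ _)]
            rw [card_filter_lt hjm]
            simp
          rw [hcardnot] at hcnt
          simpa [nsmul_eq_mul] using hcnt
        have hmj : ((m - j : ℕ) : ℝ) = (m : ℝ) - (j : ℝ) := by
          push_cast [hjm]; ring
        rw [hmj] at hbot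
        linarith
    have hstep3 : ∑ i, α i + T ≤ topsum y K := by
      have h7 := sum_le_topsum y ((univ : Finset (Fin n)).image (Fin.castAdd m) ∪ t'.image (Fin.natAdd n))
      rw [parts_card, Finset.card_univ, Fintype.card_fin, ht'c, hy, parts_sum] at h7
      have hnj : n + j = K := by omega
      rw [hnj] at h7
      simpa [ht'] using h7
    linarith
end
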